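/- Let x = (x₁,x₂) ∈ ℝ² with x ≠ 0 and y = (y₁,y₂,y₃) ∈ ℝ³ satisfy R(x,y) := x₂²y₁ + x₁²y₃ − x₁x₂y₂ = 0 and Δ(y) := y₂² − 4y₁y₃ ≠ 0, and let L be a real Lie algebra with a basis e₁,…,e₆ whose brackets are those of g(x,y). Then: (i) the center Z of L is a 3-dimensional ideal; (ii) the derived algebra D = [L,L] is a 3-dimensional Lie subalgebra isomorphic, as a real Lie algebra, to so(3,ℝ) (real skew-symmetric 3×3 matrices); (iii) Z ∩ D = 0 and Z + D = L, so L is isomorphic to the direct sum so(3) ⊕ ℝ³ with ℝ³ central. -/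

import Mathlib

noncomputable section

/-- `Wpair i j v w = vᵢwⱼ − vⱼwᵢ`, the evaluation of `eⁱ∧eʲ` on `(v,w)`. -/
def Wpair (i j : Fin 6) (v w : Fin 6 → ℝ) : ℝ := v i * w j - v j * w i

/-- The antisymmetric bilinear bracket of `g(x,y)` on `ℝ⁶`, determined (in 1-based index
notation) by `[e₃,e₅] = (x₁y₂−x₂y₁)e₁ − x₁y₁e₂`, `[e₃,e₆] = [e₄,e₅] = x₁y₃e₁ − x₂y₁e₂`,
`[e₄,e₆] = x₂y₃e₁ + (x₁y₃−x₂y₂)e₂`, `[e₁,e₅] = (x₂y₁−x₁y₂)e₃ + x₁y₁e₄`,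
`[e₁,e₆] = [e₂,e₅] = −x₁y₃e₃ + x₂y₁e₄`, `[e₂,e₆] = −x₂y₃e₃ + (x₂y₂−x₁y₃)e₄`,
`[e₁,e₃] = (x₁y₂−x₂y₁)e₅ − x₁y₁e₆`, `[e₁,e₄] = [e₂,e₃] = x₁y₃e₅ − x₂y₁e₆`,
`[e₂,e₄] = x₂y₃e₅ + (x₁y₃−x₂y₂)e₆`, `[e₁,e₂] = [e₃,e₄] = [e₅,e₆] = 0`. -/
def brXY (x : Fin 2 → ℝ) (y : Fin 3 → ℝ) (v w : Fin 6 → ℝ) : Fin 6 → ℝ :=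
  ![(x 0 * y 1 - x 1 * y 0) * Wpair 2 4 v w + x 0 * y 2 * (Wpair 2 5 v w + Wpair 3 4 v w) +
      x 1 * y 2 * Wpair 3 5 v w,
    -(x 0 * y 0 * Wpair 2 4 v w) - x 1 * y 0 * (Wpair 2 5 v w + Wpair 3 4 v w) +
      (x 0 * y 2 - x 1 * y 1) * Wpair 3 5 v w,
    (x 1 * y 0 - x 0 * y 1) * Wpair 0 4 v w - x 0 * y 2 * (Wpair 0 5 v w + Wpair 1 4 v w) -
      x 1 * y 2 * Wpair 1 5 v w,
    x 0 * y 0 * Wpair 0 4 v w + x 1 * y 0 * (Wpair 0 5 v w + Wpair 1 4 v w) +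
      (x 1 * y 1 - x 0 * y 2) * Wpair 1 5 v w,
    (x 0 * y 1 - x 1 * y 0) * Wpair 0 2 v w + x 0 * y 2 * (Wpair 0 3 v w + Wpair 1 2 v w) +
      x 1 * y 2 * Wpair 1 3 v w,
    -(x 0 * y 0 * Wpair 0 2 v w) - x 1 * y 0 * (Wpair 0 3 v w + Wpair 1 2 v w) +
      (x 0 * y 2 - x 1 * y 1) * Wpair 1 3 v w]

/-- A basis `e` of a real Lie algebra `L` realizes the brackets of `g(x,y)` if the bracket of
any two basis vectors is given by the structure constants of `brXY x y`. -/
def RealizesGXY {L : Type*} [LieRing L] [LieAlgebra ℝ L] (x : Fin 2 → ℝ) (y : Fin 3 → ℝ)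
    (e : Module.Basis (Fin 6) ℝ L) : Prop :=
  ∀ i j : Fin 6, ⁅e i, e j⁆ = ∑ k, brXY x y (Pi.single i 1) (Pi.single j 1) k • e k


namespace St9
open Matrix LieAlgebra.Orthogonal
lemma cv0 (a b c d e f : ℝ) : ![a,b,c,d,e,f] (0:Fin 6) = a := rfl
lemma cv1 (a b c d e f : ℝ) : ![a,b,c,d,e,f] (1:Fin 6) = b := rfl
lemma cv2 (a b c d e f : ℝ) : ![a,b,c,d,e,f] (2:Fin 6) = c := rfl
lemma cv3 (a b c d e f : ℝ) : ![a,b,c,d,e,f] (3:Fin 6) = d := rfl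
lemma cv4 (a b c d e f : ℝ) : ![a,b,c,d,e,f] (4:Fin 6) = e := rfl
lemma cv5 (a b c d e f : ℝ) : ![a,b,c,d,e,f] (5:Fin 6) = f := rfl
lemma cu0 (a b : ℝ) : ![a,b] (0:Fin 2) = a := rfl
lemma cu1 (a b : ℝ) : ![a,b] (1:Fin 2) = b := rfl
lemma ps0 : (Pi.single (0:Fin 6) (1:ℝ)) = ![1,0,0,0,0,0] := by funext j; fin_cases j <;> rfl
lemma ps1 : (Pi.single (1:Fin 6) (1:ℝ)) = ![0,1,0,0,0,0] := by funext j; fin_cases j <;> rfl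
lemma ps2 : (Pi.single (2:Fin 6) (1:ℝ)) = ![0,0,1,0,0,0] := by funext j; fin_cases j <;> rfl
lemma ps3 : (Pi.single (3:Fin 6) (1:ℝ)) = ![0,0,0,1,0,0] := by funext j; fin_cases j <;> rfl
lemma ps4 : (Pi.single (4:Fin 6) (1:ℝ)) = ![0,0,0,0,1,0] := by funext j; fin_cases j <;> rfl
lemma ps5 : (Pi.single (5:Fin 6) (1:ℝ)) = ![0,0,0,0,0,1] := by funext j; fin_cases j <;> rfl
lemma bil0 (x : Fin 2 → ℝ) (y : Fin 3 → ℝ) (v w : Fin 6 → ℝ) :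
    ∑ i, ∑ j, (v i * w j) * brXY x y (Pi.single i 1) (Pi.single j 1) 0 = brXY x y v w 0 := by
  simp only [Fin.sum_univ_six, ps0, ps1, ps2, ps3, ps4, ps5, brXY, Wpair,
    cv0, cv1, cv2, cv3, cv4, cv5, zero_mul, mul_zero, one_mul, mul_one, zero_add, add_zero,
    zero_sub, sub_zero, neg_zero, mul_neg, neg_neg, sub_self]
  ring
lemma bil1 (x : Fin 2 → ℝ) (y : Fin 3 → ℝ) (v w : Fin 6 → ℝ) :
    ∑ i, ∑ j, (v i * w j) * brXY x y (Pi.single i 1) (Pi.single j 1) 1 = brXY x y v w 1 := by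
  simp only [Fin.sum_univ_six, ps0, ps1, ps2, ps3, ps4, ps5, brXY, Wpair,
    cv0, cv1, cv2, cv3, cv4, cv5, zero_mul, mul_zero, one_mul, mul_one, zero_add, add_zero,
    zero_sub, sub_zero, neg_zero, mul_neg, neg_neg, sub_self]
  ring
lemma bil2 (x : Fin 2 → ℝ) (y : Fin 3 → ℝ) (v w : Fin 6 → ℝ) :
    ∑ i, ∑ j, (v i * w j) * brXY x y (Pi.single i 1) (Pi.single j 1) 2 = brXY x y v w 2 := by
  simp only [Fin.sum_univ_six, ps0, ps1, ps2, ps3, ps4, ps5, brXY, Wpair,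
    cv0, cv1, cv2, cv3, cv4, cv5, zero_mul, mul_zero, one_mul, mul_one, zero_add, add_zero,
    zero_sub, sub_zero, neg_zero, mul_neg, neg_neg, sub_self]
  ring
lemma bil3 (x : Fin 2 → ℝ) (y : Fin 3 → ℝ) (v w : Fin 6 → ℝ) :
    ∑ i, ∑ j, (v i * w j) * brXY x y (Pi.single i 1) (Pi.single j 1) 3 = brXY x y v w 3 := by
  simp only [Fin.sum_univ_six, ps0, ps1, ps2, ps3, ps4, ps5, brXY, Wpair,
    cv0, cv1, cv2, cv3, cv4, cv5, zero_mul, mul_zero, one_mul, mul_one, zero_add, add_zero,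
    zero_sub, sub_zero, neg_zero, mul_neg, neg_neg, sub_self]
  ring
lemma bil4 (x : Fin 2 → ℝ) (y : Fin 3 → ℝ) (v w : Fin 6 → ℝ) :
    ∑ i, ∑ j, (v i * w j) * brXY x y (Pi.single i 1) (Pi.single j 1) 4 = brXY x y v w 4 := by
  simp only [Fin.sum_univ_six, ps0, ps1, ps2, ps3, ps4, ps5, brXY, Wpair,
    cv0, cv1, cv2, cv3, cv4, cv5, zero_mul, mul_zero, one_mul, mul_one, zero_add, add_zero,
    zero_sub, sub_zero, neg_zero, mul_neg, neg_neg, sub_self]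
  ring
lemma bil5 (x : Fin 2 → ℝ) (y : Fin 3 → ℝ) (v w : Fin 6 → ℝ) :
    ∑ i, ∑ j, (v i * w j) * brXY x y (Pi.single i 1) (Pi.single j 1) 5 = brXY x y v w 5 := by
  simp only [Fin.sum_univ_six, ps0, ps1, ps2, ps3, ps4, ps5, brXY, Wpair,
    cv0, cv1, cv2, cv3, cv4, cv5, zero_mul, mul_zero, one_mul, mul_one, zero_add, add_zero,
    zero_sub, sub_zero, neg_zero, mul_neg, neg_neg, sub_self]
  ring
lemma brXY_bilin (x : Fin 2 → ℝ) (y : Fin 3 → ℝ) (v w : Fin 6 → ℝ) : ∀ k,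
    ∑ i, ∑ j, (v i * w j) * brXY x y (Pi.single i 1) (Pi.single j 1) k = brXY x y v w k
  | ⟨0, _⟩ => bil0 x y v w
  | ⟨1, _⟩ => bil1 x y v w
  | ⟨2, _⟩ => bil2 x y v w
  | ⟨3, _⟩ => bil3 x y v w
  | ⟨4, _⟩ => bil4 x y v w
  | ⟨5, _⟩ => bil5 x y v w

def sl0 (u : Fin 2 → ℝ) : Fin 6 → ℝ := ![u 0, u 1, 0, 0, 0, 0]
def sl1 (u : Fin 2 → ℝ) : Fin 6 → ℝ := ![0, 0, u 0, u 1, 0, 0]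
def sl2 (u : Fin 2 → ℝ) : Fin 6 → ℝ := ![0, 0, 0, 0, u 0, u 1]

section alg
variable {L : Type*} [LieRing L] [LieAlgebra ℝ L]

def lieL (z : L) : L →ₗ[ℝ] L := ⟨⟨fun u => ⁅u, z⁆, fun a b => add_lie a b z⟩,
  fun t a => smul_lie t a z⟩
def lieR (z : L) : L →ₗ[ℝ] L := ⟨⟨fun u => ⁅z, u⁆, fun a b => lie_add z a b⟩,
  fun t a => lie_smul t z a⟩

lemma lie_sum' {ι : Type*} [Fintype ι] (z : L) (f : ι → L) :
    ⁅∑ i, f i, z⁆ = ∑ i, ⁅f i, z⁆ := map_sum (lieL z) f Finset.univ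

lemma sum_lie' {ι : Type*} [Fintype ι] (z : L) (f : ι → L) :
    ⁅z, ∑ i, f i⁆ = ∑ i, ⁅z, f i⁆ := map_sum (lieR z) f Finset.univ

lemma lie_expand {ι : Type*} [Fintype ι] (b : ι → L) (v w : ι → ℝ) :
    ⁅∑ i, v i • b i, ∑ j, w j • b j⁆ = ∑ i, ∑ j, (v i * w j) • ⁅b i, b j⁆ := by
  rw [lie_sum']
  refine Finset.sum_congr rfl fun i _ => ?_
  rw [smul_lie, sum_lie', Finset.smul_sum]
  exact Finset.sum_congr rfl fun j _ => by rw [lie_smul, smul_smul]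

lemma lie_eb {x : Fin 2 → ℝ} {y : Fin 3 → ℝ} {e : Module.Basis (Fin 6) ℝ L}
    (he : RealizesGXY x y e) (v w : Fin 6 → ℝ) :
    ⁅∑ i, v i • e i, ∑ j, w j • e j⁆ = ∑ k, brXY x y v w k • e k := by
  rw [lie_expand]
  have step : ∀ i j : Fin 6, (v i * w j) • ⁅e i, e j⁆
      = ∑ k, ((v i * w j) * brXY x y (Pi.single i 1) (Pi.single j 1) k) • e k := fun i j => by
    rw [he i j, Finset.smul_sum]
    exact Finset.sum_congr rfl fun k _ => by rw [smul_smul]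
  simp only [step]
  rw [show (∑ i, ∑ j, ∑ k, ((v i * w j) * brXY x y (Pi.single i 1) (Pi.single j 1) k) • e k)
      = ∑ k, ∑ i, ∑ j, ((v i * w j) * brXY x y (Pi.single i 1) (Pi.single j 1) k) • e k from
    (Finset.sum_congr rfl fun i _ => Finset.sum_comm).trans Finset.sum_comm]
  refine Finset.sum_congr rfl fun k _ => ?_
  rw [← brXY_bilin x y v w k]
  simp only [Finset.sum_smul]
end alg

-- so(3) material
lemma matA_mem_so (A : Matrix (Fin 3) (Fin 3) ℝ) (h : Aᵀ = -A) : A ∈ so (Fin 3) ℝ :=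
  (LieAlgebra.Orthogonal.mem_so _ _ _).mpr h

def A0 : Matrix (Fin 3) (Fin 3) ℝ := !![0,0,0; 0,0,-1; 0,1,0]
def A1 : Matrix (Fin 3) (Fin 3) ℝ := !![0,0,1; 0,0,0; -1,0,0]
def A2 : Matrix (Fin 3) (Fin 3) ℝ := !![0,-1,0; 1,0,0; 0,0,0]

lemma skewA0 : A0ᵀ = -A0 := by
  ext i j; fin_cases i <;> fin_cases j <;> simp [A0, Matrix.vecHead, Matrix.vecTail]
lemma skewA1 : A1ᵀ = -A1 := by
  ext i j; fin_cases i <;> fin_cases j <;> simp [A1, Matrix.vecHead, Matrix.vecTail]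
lemma skewA2 : A2ᵀ = -A2 := by
  ext i j; fin_cases i <;> fin_cases j <;> simp [A2, Matrix.vecHead, Matrix.vecTail]

lemma brA01 : ⁅A0, A1⁆ = A2 := by
  rw [Ring.lie_def]
  simp only [A0, A1, A2, Matrix.mul_fin_three]
  norm_num
  simp [funext_iff, Fin.forall_fin_succ]
lemma brA12 : ⁅A1, A2⁆ = A0 := by
  rw [Ring.lie_def]
  simp only [A0, A1, A2, Matrix.mul_fin_three]
  norm_num
  simp [funext_iff, Fin.forall_fin_succ]
lemma brA20 : ⁅A2, A0⁆ = A1 := by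
  rw [Ring.lie_def]
  simp only [A0, A1, A2, Matrix.mul_fin_three]
  norm_num
  simp [funext_iff, Fin.forall_fin_succ]

def Fso : Fin 3 → ↥(so (Fin 3) ℝ) :=
  ![⟨A0, matA_mem_so A0 skewA0⟩, ⟨A1, matA_mem_so A1 skewA1⟩, ⟨A2, matA_mem_so A2 skewA2⟩]

lemma coeFso0 : (Fso 0).1 = A0 := rfl
lemma coeFso1 : (Fso 1).1 = A1 := rfl
lemma coeFso2 : (Fso 2).1 = A2 := rfl

lemma liFso : LinearIndependent ℝ Fso := by
  have h : LinearIndependent ℝ (fun m => (Fso m).1) := by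
    rw [Fintype.linearIndependent_iff]
    intro g hg
    have h21 := congrFun (congrFun hg 2) 1
    have h02 := congrFun (congrFun hg 0) 2
    have h10 := congrFun (congrFun hg 1) 0
    simp only [Fin.sum_univ_three, coeFso0, coeFso1, coeFso2, A0, A1, A2] at h21 h02 h10
    simp [Matrix.vecHead, Matrix.vecTail] at h21 h02 h10
    intro i
    exact match i with
    | ⟨0, _⟩ => h21
    | ⟨1, _⟩ => h02
    | ⟨2, _⟩ => h10
  exact h.of_comp (Submodule.subtype _)

lemma spanFso : ⊤ ≤ Submodule.span ℝ (Set.range Fso) := by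
  intro v _
  have hv : (v.1)ᵀ = -(v.1) := (LieAlgebra.Orthogonal.mem_so _ _ _).mp v.2
  have hsk : ∀ i j, v.1 j i = -(v.1 i j) := fun i j => by
    have := congrFun (congrFun hv i) j
    simpa [Matrix.transpose_apply] using this
  rw [Submodule.mem_span_range_iff_exists_fun]
  refine ⟨![v.1 2 1, v.1 0 2, v.1 1 0], Subtype.ext ?_⟩
  have hcoe : (∑ i, (![v.1 2 1, v.1 0 2, v.1 1 0]) i • Fso i).1
      = ∑ i, (![v.1 2 1, v.1 0 2, v.1 1 0]) i • (Fso i).1 := by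
    rw [AddSubmonoidClass.coe_finset_sum]
    exact Finset.sum_congr rfl fun i _ => rfl
  rw [hcoe, Fin.sum_univ_three]
  have h00 := hsk 0 0
  have h11 := hsk 1 1
  have h22 := hsk 2 2
  have h01 := hsk 0 1
  have h02 := hsk 0 2
  have h12 := hsk 1 2
  ext i j
  simp only [coeFso0, coeFso1, coeFso2, A0, A1, A2]
  fin_cases i <;> fin_cases j <;> (simp [Matrix.vecHead, Matrix.vecTail]; try linarith)

noncomputable def soB : Module.Basis (Fin 3) ℝ ↥(so (Fin 3) ℝ) := Module.Basis.mk liFso spanFso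

lemma soB_apply (m : Fin 3) : soB m = Fso m := Module.Basis.mk_apply liFso spanFso m

lemma brFso01 : ⁅Fso 0, Fso 1⁆ = Fso 2 := Subtype.ext (by
  show ⁅A0, A1⁆ = A2
  exact brA01)
lemma brFso12 : ⁅Fso 1, Fso 2⁆ = Fso 0 := Subtype.ext (by
  show ⁅A1, A2⁆ = A0
  exact brA12)
lemma brFso20 : ⁅Fso 2, Fso 0⁆ = Fso 1 := Subtype.ext (by
  show ⁅A2, A0⁆ = A1
  exact brA20)


section key
variable {L : Type*} [LieRing L] [LieAlgebra ℝ L]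

lemma span_pair_mem (u0 u1 : L) (z d : Fin 2 → ℝ) (lam : ℝ) (hlam : lam ≠ 0)
    (hdet : z 0 * d 1 - z 1 * d 0 ≠ 0) (A B : L)
    (hA : A = z 0 • u0 + z 1 • u1) (hB : B = lam⁻¹ • (d 0 • u0 + d 1 • u1)) (S : Submodule ℝ L)
    (hAS : A ∈ S) (hBS : B ∈ S) : u0 ∈ S ∧ u1 ∈ S := by
  have h0 : u0 = (d 1 / (z 0 * d 1 - z 1 * d 0)) • A
      + (-(lam * z 1) / (z 0 * d 1 - z 1 * d 0)) • B := by
    rw [hA, hB]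
    match_scalars <;> (field_simp; try ring) <;> grind
  have h1 : u1 = (-(d 0) / (z 0 * d 1 - z 1 * d 0)) • A
      + (lam * z 0 / (z 0 * d 1 - z 1 * d 0)) • B := by
    rw [hA, hB]
    match_scalars <;> (field_simp; try ring) <;> grind
  constructor
  · rw [h0]; exact add_mem (S.smul_mem _ hAS) (S.smul_mem _ hBS)
  · rw [h1]; exact add_mem (S.smul_mem _ hAS) (S.smul_mem _ hBS)

theorem key (x : Fin 2 → ℝ) (y : Fin 3 → ℝ) (e : Module.Basis (Fin 6) ℝ L)
    (he : RealizesGXY x y e) (z d : Fin 2 → ℝ) (lam : ℝ) (hlam : lam ≠ 0)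
    (hdet : z 0 * d 1 - z 1 * d 0 ≠ 0)
    (hz0 : ∀ w, brXY x y (sl0 z) w = 0)
    (hz1 : ∀ w, brXY x y (sl1 z) w = 0)
    (hz2 : ∀ w, brXY x y (sl2 z) w = 0)
    (hd01 : brXY x y (sl0 d) (sl1 d) = lam • sl2 d)
    (hd12 : brXY x y (sl1 d) (sl2 d) = lam • sl0 d)
    (hd20 : brXY x y (sl2 d) (sl0 d) = lam • sl1 d) :
    Module.finrank ℝ (LieAlgebra.center ℝ L) = 3 ∧
    Module.finrank ℝ ↥(⁅(⊤ : LieIdeal ℝ L), (⊤ : LieIdeal ℝ L)⁆ : LieIdeal ℝ L) = 3 ∧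
    Nonempty (↥(⁅(⊤ : LieIdeal ℝ L), (⊤ : LieIdeal ℝ L)⁆ : LieIdeal ℝ L) ≃ₗ⁅ℝ⁆
      LieAlgebra.Orthogonal.so (Fin 3) ℝ) ∧
    LieAlgebra.center ℝ L ⊓ ⁅(⊤ : LieIdeal ℝ L), (⊤ : LieIdeal ℝ L)⁆ = ⊥ ∧
    LieAlgebra.center ℝ L ⊔ ⁅(⊤ : LieIdeal ℝ L), (⊤ : LieIdeal ℝ L)⁆ = ⊤ := by
  classical
  set c : Fin 6 → L := ![∑ i, sl0 z i • e i, ∑ i, sl1 z i • e i, ∑ i, sl2 z i • e i,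
      lam⁻¹ • ∑ i, sl0 d i • e i, lam⁻¹ • ∑ i, sl1 d i • e i, lam⁻¹ • ∑ i, sl2 d i • e i]
    with hc
  have hc0 : c 0 = ∑ i, sl0 z i • e i := rfl
  have hc1 : c 1 = ∑ i, sl1 z i • e i := rfl
  have hc2 : c 2 = ∑ i, sl2 z i • e i := rfl
  have hc3 : c 3 = lam⁻¹ • ∑ i, sl0 d i • e i := rfl
  have hc4 : c 4 = lam⁻¹ • ∑ i, sl1 d i • e i := rfl
  have hc5 : c 5 = lam⁻¹ • ∑ i, sl2 d i • e i := rfl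
  have hcen : ∀ (sl : (Fin 2 → ℝ) → Fin 6 → ℝ), (∀ w, brXY x y (sl z) w = 0) →
      ∀ v : L, ⁅∑ i, sl z i • e i, v⁆ = 0 := by
    intro sl hsl v
    conv_lhs => rw [← Module.Basis.sum_repr e v]
    rw [lie_eb he, hsl]
    simp
  have hcen0 : ∀ v : L, ⁅c 0, v⁆ = 0 := fun v => by rw [hc0]; exact hcen sl0 hz0 v
  have hcen1 : ∀ v : L, ⁅c 1, v⁆ = 0 := fun v => by rw [hc1]; exact hcen sl1 hz1 v
  have hcen2 : ∀ v : L, ⁅c 2, v⁆ = 0 := fun v => by rw [hc2]; exact hcen sl2 hz2 v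
  have hDbr : ∀ (a b c' : Fin 6 → ℝ), brXY x y a b = lam • c' →
      ⁅lam⁻¹ • ∑ i, a i • e i, lam⁻¹ • ∑ i, b i • e i⁆ = lam⁻¹ • ∑ i, c' i • e i := by
    intro a b c' h
    rw [smul_lie, lie_smul, lie_eb he, h]
    rw [show (∑ k, (lam • c') k • e k) = lam • ∑ k, c' k • e k from by
      rw [Finset.smul_sum]
      exact Finset.sum_congr rfl fun k _ => by simp [smul_smul]]
    rw [smul_smul, smul_smul, show lam⁻¹ * lam⁻¹ * lam = lam⁻¹ from by field_simp]
  have hb34 : ⁅c 3, c 4⁆ = c 5 := by rw [hc3, hc4, hc5]; exact hDbr _ _ _ hd01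
  have hb45 : ⁅c 4, c 5⁆ = c 3 := by rw [hc4, hc5, hc3]; exact hDbr _ _ _ hd12
  have hb53 : ⁅c 5, c 3⁆ = c 4 := by rw [hc5, hc3, hc4]; exact hDbr _ _ _ hd20
  haveI : Module.Finite ℝ L := Module.Finite.of_basis e
  have hcard : Fintype.card (Fin 6) = Module.finrank ℝ L := by
    rw [Module.finrank_eq_card_basis e]
  have hsl0e : ∀ (w : Fin 2 → ℝ), ∑ i, sl0 w i • e i = w 0 • e 0 + w 1 • e 1 := by
    intro w
    rw [Fin.sum_univ_six]
    simp only [sl0, cv0, cv1, cv2, cv3, cv4, cv5, zero_smul, add_zero]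
  have hsl1e : ∀ (w : Fin 2 → ℝ), ∑ i, sl1 w i • e i = w 0 • e 2 + w 1 • e 3 := by
    intro w
    rw [Fin.sum_univ_six]
    simp only [sl1, cv0, cv1, cv2, cv3, cv4, cv5, zero_smul, add_zero, zero_add]
  have hsl2e : ∀ (w : Fin 2 → ℝ), ∑ i, sl2 w i • e i = w 0 • e 4 + w 1 • e 5 := by
    intro w
    rw [Fin.sum_univ_six]
    simp only [sl2, cv0, cv1, cv2, cv3, cv4, cv5, zero_smul, add_zero, zero_add]
  have hm01 := span_pair_mem (e 0) (e 1) z d lam hlam hdet (c 0) (c 3)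
    (by rw [hc0, hsl0e]) (by rw [hc3, hsl0e]) (Submodule.span ℝ (Set.range c))
    (Submodule.subset_span ⟨0, rfl⟩) (Submodule.subset_span ⟨3, rfl⟩)
  have hm23 := span_pair_mem (e 2) (e 3) z d lam hlam hdet (c 1) (c 4)
    (by rw [hc1, hsl1e]) (by rw [hc4, hsl1e]) (Submodule.span ℝ (Set.range c))
    (Submodule.subset_span ⟨1, rfl⟩) (Submodule.subset_span ⟨4, rfl⟩)
  have hm45 := span_pair_mem (e 4) (e 5) z d lam hlam hdet (c 2) (c 5)
    (by rw [hc2, hsl2e]) (by rw [hc5, hsl2e]) (Submodule.span ℝ (Set.range c))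
    (Submodule.subset_span ⟨2, rfl⟩) (Submodule.subset_span ⟨5, rfl⟩)
  have hmem : ∀ j : Fin 6, e j ∈ Submodule.span ℝ (Set.range c) := fun j =>
    match j with
    | ⟨0,_⟩ => hm01.1
    | ⟨1,_⟩ => hm01.2
    | ⟨2,_⟩ => hm23.1
    | ⟨3,_⟩ => hm23.2
    | ⟨4,_⟩ => hm45.1
    | ⟨5,_⟩ => hm45.2
  have htop : ⊤ ≤ Submodule.span ℝ (Set.range c) := by
    rw [← e.span_eq, Submodule.span_le]
    rintro _ ⟨j, rfl⟩
    exact hmem j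
  set cb : Module.Basis (Fin 6) ℝ L := basisOfTopLeSpanOfCardEqFinrank c htop hcard with hcbdef
  have hcb : ⇑cb = c := coe_basisOfTopLeSpanOfCardEqFinrank c htop hcard
  set gZ : Fin 3 → Fin 6 := fun m => ⟨m.1, by omega⟩ with hgZ
  set gD : Fin 3 → Fin 6 := fun m => ⟨m.1 + 3, by omega⟩ with hgD
  have hgZinj : Function.Injective gZ := fun a b h => by
    apply Fin.ext
    have := congrArg Fin.val h
    simpa [hgZ] using this
  have hgDinj : Function.Injective gD := fun a b h => by
    apply Fin.ext
    have := congrArg Fin.val h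
    simp only [hgD] at this
    omega
  set SZ := Submodule.span ℝ (Set.range (c ∘ gZ)) with hSZ
  set SD := Submodule.span ℝ (Set.range (c ∘ gD)) with hSD
  have liZ : LinearIndependent ℝ (c ∘ gZ) := by
    have := cb.linearIndependent.comp gZ hgZinj
    rwa [hcb] at this
  have liD : LinearIndependent ℝ (c ∘ gD) := by
    have := cb.linearIndependent.comp gD hgDinj
    rwa [hcb] at this
  -- center = SZ
  have hcenter : LieSubmodule.toSubmodule (LieAlgebra.center ℝ L) = SZ := by
    apply le_antisymm
    · intro v hv
      rw [LieSubmodule.mem_toSubmodule] at hv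
      have hv' : ∀ u : L, ⁅u, v⁆ = 0 := (LieModule.mem_maxTrivSubmodule ℝ L L v).mp hv
      have hexp : ∀ u : L, ⁅u, v⁆ = ∑ i, cb.repr v i • ⁅u, cb i⁆ := fun u => by
        conv_lhs => rw [← cb.sum_repr v]
        rw [sum_lie']
        exact Finset.sum_congr rfl fun i _ => lie_smul _ _ _
      have h4 : (0 : L) = ∑ i, cb.repr v i • ⁅c 4, c i⁆ := by
        rw [← hv' (c 4), hexp (c 4)]
        simp only [hcb]
      have h5 : (0 : L) = ∑ i, cb.repr v i • ⁅c 5, c i⁆ := by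
        rw [← hv' (c 5), hexp (c 5)]
        simp only [hcb]
      rw [Fin.sum_univ_six] at h4 h5
      have s40 : ⁅c 4, c 0⁆ = 0 := by rw [← lie_skew, hcen0, neg_zero]
      have s41 : ⁅c 4, c 1⁆ = 0 := by rw [← lie_skew, hcen1, neg_zero]
      have s42 : ⁅c 4, c 2⁆ = 0 := by rw [← lie_skew, hcen2, neg_zero]
      have s43 : ⁅c 4, c 3⁆ = -(c 5) := by rw [← lie_skew, hb34]
      have s50 : ⁅c 5, c 0⁆ = 0 := by rw [← lie_skew, hcen0, neg_zero]
      have s51 : ⁅c 5, c 1⁆ = 0 := by rw [← lie_skew, hcen1, neg_zero]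
      have s52 : ⁅c 5, c 2⁆ = 0 := by rw [← lie_skew, hcen2, neg_zero]
      have s54 : ⁅c 5, c 4⁆ = -(c 3) := by rw [← lie_skew, hb45]
      rw [s40, s41, s42, s43, lie_self, hb45] at h4
      rw [s50, s51, s52, hb53, s54, lie_self] at h5
      simp only [smul_zero, zero_add, add_zero, smul_neg] at h4 h5
      rw [show c 3 = cb 3 from (congrFun hcb 3).symm,
        show c 5 = cb 5 from (congrFun hcb 5).symm] at h4
      rw [show c 3 = cb 3 from (congrFun hcb 3).symm,
        show c 4 = cb 4 from (congrFun hcb 4).symm] at h5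
      have ra3 : cb.repr v 3 = 0 := by
        have h' := congrArg (fun u => cb.repr u 5) h4
        simp at h'
        first | exact h' | exact h'.symm | linarith [h']
      have ra5 : cb.repr v 5 = 0 := by
        have h' := congrArg (fun u => cb.repr u 3) h4
        simp at h'
        first | exact h' | exact h'.symm | linarith [h']
      have ra4 : cb.repr v 4 = 0 := by
        have h' := congrArg (fun u => cb.repr u 3) h5
        simp at h'
        first | exact h' | exact h'.symm | linarith [h']
      have hvsum := cb.sum_repr v
      rw [Fin.sum_univ_six] at hvsum
      have mz : ∀ m : Fin 3, cb (gZ m) ∈ SZ := fun m => Submodule.subset_span ⟨m, by rw [hcb]; rfl⟩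
      rw [← hvsum, ra3, ra4, ra5, zero_smul, zero_smul, zero_smul, add_zero, add_zero, add_zero]
      exact add_mem (add_mem (SZ.smul_mem _ (mz 0)) (SZ.smul_mem _ (mz 1))) (SZ.smul_mem _ (mz 2))
    · rw [hSZ, Submodule.span_le]
      rintro _ ⟨m, rfl⟩
      rw [SetLike.mem_coe, LieSubmodule.mem_toSubmodule]
      refine (LieModule.mem_maxTrivSubmodule ℝ L L _).mpr fun u => ?_
      rw [← lie_skew]
      have hz' : ⁅(c ∘ gZ) m, u⁆ = 0 := match m with
        | ⟨0,_⟩ => hcen0 u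
        | ⟨1,_⟩ => hcen1 u
        | ⟨2,_⟩ => hcen2 u
      rw [hz', neg_zero]
  -- derived = SD
  have hder : LieSubmodule.toSubmodule (⁅(⊤ : LieIdeal ℝ L), (⊤ : LieIdeal ℝ L)⁆ : LieIdeal ℝ L)
      = SD := by
    rw [LieSubmodule.lieIdeal_oper_eq_linear_span']
    apply le_antisymm
    · rw [Submodule.span_le]
      rintro _ ⟨u, -, v, -, rfl⟩
      have memD : ∀ k : Fin 3, c (gD k) ∈ SD := fun k => Submodule.subset_span ⟨k, rfl⟩
      have skewm : ∀ p q : L, ⁅p, q⁆ ∈ SD → ⁅q, p⁆ ∈ SD := fun p q h => by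
        rw [← lie_skew]
        exact Submodule.neg_mem _ h
      have h36 : ∀ i j : Fin 6, ⁅c i, c j⁆ ∈ SD := by
        intro i j
        match i, j with
        | ⟨0,_⟩, j => show ⁅c 0, c j⁆ ∈ SD; rw [hcen0 (c j)]; exact Submodule.zero_mem _
        | ⟨1,_⟩, j => show ⁅c 1, c j⁆ ∈ SD; rw [hcen1 (c j)]; exact Submodule.zero_mem _
        | ⟨2,_⟩, j => show ⁅c 2, c j⁆ ∈ SD; rw [hcen2 (c j)]; exact Submodule.zero_mem _
        | ⟨3,_⟩, ⟨0,_⟩ => show ⁅c 3, c 0⁆ ∈ SD; exact skewm _ _ (by rw [hcen0 (c 3)]; exact Submodule.zero_mem _)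
        | ⟨3,_⟩, ⟨1,_⟩ => show ⁅c 3, c 1⁆ ∈ SD; exact skewm _ _ (by rw [hcen1 (c 3)]; exact Submodule.zero_mem _)
        | ⟨3,_⟩, ⟨2,_⟩ => show ⁅c 3, c 2⁆ ∈ SD; exact skewm _ _ (by rw [hcen2 (c 3)]; exact Submodule.zero_mem _)
        | ⟨4,_⟩, ⟨0,_⟩ => show ⁅c 4, c 0⁆ ∈ SD; exact skewm _ _ (by rw [hcen0 (c 4)]; exact Submodule.zero_mem _)
        | ⟨4,_⟩, ⟨1,_⟩ => show ⁅c 4, c 1⁆ ∈ SD; exact skewm _ _ (by rw [hcen1 (c 4)]; exact Submodule.zero_mem _)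
        | ⟨4,_⟩, ⟨2,_⟩ => show ⁅c 4, c 2⁆ ∈ SD; exact skewm _ _ (by rw [hcen2 (c 4)]; exact Submodule.zero_mem _)
        | ⟨5,_⟩, ⟨0,_⟩ => show ⁅c 5, c 0⁆ ∈ SD; exact skewm _ _ (by rw [hcen0 (c 5)]; exact Submodule.zero_mem _)
        | ⟨5,_⟩, ⟨1,_⟩ => show ⁅c 5, c 1⁆ ∈ SD; exact skewm _ _ (by rw [hcen1 (c 5)]; exact Submodule.zero_mem _)
        | ⟨5,_⟩, ⟨2,_⟩ => show ⁅c 5, c 2⁆ ∈ SD; exact skewm _ _ (by rw [hcen2 (c 5)]; exact Submodule.zero_mem _)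
        | ⟨3,_⟩, ⟨3,_⟩ => show ⁅c 3, c 3⁆ ∈ SD; rw [lie_self]; exact Submodule.zero_mem _
        | ⟨3,_⟩, ⟨4,_⟩ => show ⁅c 3, c 4⁆ ∈ SD; rw [hb34]; exact memD 2
        | ⟨3,_⟩, ⟨5,_⟩ => show ⁅c 3, c 5⁆ ∈ SD; exact skewm _ _ (by rw [hb53]; exact memD 1)
        | ⟨4,_⟩, ⟨3,_⟩ => show ⁅c 4, c 3⁆ ∈ SD; exact skewm _ _ (by rw [hb34]; exact memD 2)
        | ⟨4,_⟩, ⟨4,_⟩ => show ⁅c 4, c 4⁆ ∈ SD; rw [lie_self]; exact Submodule.zero_mem _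
        | ⟨4,_⟩, ⟨5,_⟩ => show ⁅c 4, c 5⁆ ∈ SD; rw [hb45]; exact memD 0
        | ⟨5,_⟩, ⟨3,_⟩ => show ⁅c 5, c 3⁆ ∈ SD; rw [hb53]; exact memD 1
        | ⟨5,_⟩, ⟨4,_⟩ => show ⁅c 5, c 4⁆ ∈ SD; exact skewm _ _ (by rw [hb45]; exact memD 0)
        | ⟨5,_⟩, ⟨5,_⟩ => show ⁅c 5, c 5⁆ ∈ SD; rw [lie_self]; exact Submodule.zero_mem _
      have hexp2 : ⁅u, v⁆ = ∑ i, ∑ j, (cb.repr u i * cb.repr v j) • ⁅cb i, cb j⁆ := by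
        conv_lhs => rw [← cb.sum_repr u, ← cb.sum_repr v]
        exact lie_expand _ _ _
      rw [SetLike.mem_coe, hexp2]
      refine Submodule.sum_mem _ fun i _ => Submodule.sum_mem _ fun j _ =>
        Submodule.smul_mem _ _ ?_
      rw [hcb]
      exact h36 i j
    · rw [hSD, Submodule.span_le]
      rintro _ ⟨m, rfl⟩
      rw [SetLike.mem_coe]
      exact match m with
        | ⟨0,_⟩ => Submodule.subset_span
            ⟨c 4, LieSubmodule.mem_top _, c 5, LieSubmodule.mem_top _, hb45⟩
        | ⟨1,_⟩ => Submodule.subset_span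
            ⟨c 5, LieSubmodule.mem_top _, c 3, LieSubmodule.mem_top _, hb53⟩
        | ⟨2,_⟩ => Submodule.subset_span
            ⟨c 3, LieSubmodule.mem_top _, c 4, LieSubmodule.mem_top _, hb34⟩
  -- finranks
  have frZ : Module.finrank ℝ SZ = 3 := by
    rw [hSZ, finrank_span_eq_card liZ]
    simp
  have frD : Module.finrank ℝ SD = 3 := by
    rw [hSD, finrank_span_eq_card liD]
    simp
  have hfr1 : Module.finrank ℝ (LieAlgebra.center ℝ L) = 3 :=
    ((LinearEquiv.ofEq _ _ hcenter).finrank_eq).trans frZ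
  have hfr2 : Module.finrank ℝ
      ↥(⁅(⊤ : LieIdeal ℝ L), (⊤ : LieIdeal ℝ L)⁆ : LieIdeal ℝ L) = 3 :=
    ((LinearEquiv.ofEq _ _ hder).finrank_eq).trans frD
  -- basis of the derived ideal
  set DI := (⁅(⊤ : LieIdeal ℝ L), (⊤ : LieIdeal ℝ L)⁆ : LieIdeal ℝ L) with hDIdef
  set bD : Module.Basis (Fin 3) ℝ ↥DI :=
    (Module.Basis.span liD).map (LinearEquiv.ofEq _ _ hder.symm) with hbDdef
  have hbDm : ∀ m : Fin 3, (bD m : L) = c (gD m) := fun m => by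
    rw [hbDdef, Module.Basis.map_apply]
    show ((Module.Basis.span liD m : ↥(Submodule.span ℝ (Set.range (c ∘ gD)))) : L) = c (gD m)
    rw [Module.Basis.span_apply]
    rfl
  have cbr : ∀ (p q r : ↥DI), (⁅(p : L), (q : L)⁆ = (r : L)) → ⁅p, q⁆ = r := fun p q r h =>
    Subtype.ext (by rw [← h]; rfl)
  have hbD01 : ⁅bD 0, bD 1⁆ = bD 2 := cbr _ _ _ (by
    rw [hbDm 0, hbDm 1, hbDm 2]
    exact hb34)
  have hbD12 : ⁅bD 1, bD 2⁆ = bD 0 := cbr _ _ _ (by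
    rw [hbDm 1, hbDm 2, hbDm 0]
    exact hb45)
  have hbD20 : ⁅bD 2, bD 0⁆ = bD 1 := cbr _ _ _ (by
    rw [hbDm 2, hbDm 0, hbDm 1]
    exact hb53)
  have hso01 : ⁅soB 0, soB 1⁆ = soB 2 := by
    rw [soB_apply, soB_apply, soB_apply]
    exact brFso01
  have hso12 : ⁅soB 1, soB 2⁆ = soB 0 := by
    rw [soB_apply, soB_apply, soB_apply]
    exact brFso12
  have hso20 : ⁅soB 2, soB 0⁆ = soB 1 := by
    rw [soB_apply, soB_apply, soB_apply]
    exact brFso20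
  set f := bD.equiv soB (Equiv.refl _) with hfdef
  have hfD : ∀ m, f (bD m) = soB m := fun m => by
    rw [hfdef, Module.Basis.equiv_apply, Equiv.refl_apply]
  have htab : ∀ i j : Fin 3, f ⁅bD i, bD j⁆ = ⁅f (bD i), f (bD j)⁆ := by
    intro i j
    match i, j with
    | ⟨0,_⟩, ⟨0,_⟩ => show f ⁅bD 0, bD 0⁆ = ⁅f (bD 0), f (bD 0)⁆; rw [lie_self, lie_self, map_zero]
    | ⟨1,_⟩, ⟨1,_⟩ => show f ⁅bD 1, bD 1⁆ = ⁅f (bD 1), f (bD 1)⁆; rw [lie_self, lie_self, map_zero]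
    | ⟨2,_⟩, ⟨2,_⟩ => show f ⁅bD 2, bD 2⁆ = ⁅f (bD 2), f (bD 2)⁆; rw [lie_self, lie_self, map_zero]
    | ⟨0,_⟩, ⟨1,_⟩ => show f ⁅bD 0, bD 1⁆ = ⁅f (bD 0), f (bD 1)⁆; rw [hbD01, hfD 2, hfD 0, hfD 1, hso01]
    | ⟨1,_⟩, ⟨2,_⟩ => show f ⁅bD 1, bD 2⁆ = ⁅f (bD 1), f (bD 2)⁆; rw [hbD12, hfD 0, hfD 1, hfD 2, hso12]
    | ⟨2,_⟩, ⟨0,_⟩ => show f ⁅bD 2, bD 0⁆ = ⁅f (bD 2), f (bD 0)⁆; rw [hbD20, hfD 1, hfD 2, hfD 0, hso20]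
    | ⟨1,_⟩, ⟨0,_⟩ => show f ⁅bD 1, bD 0⁆ = ⁅f (bD 1), f (bD 0)⁆; rw [← lie_skew (bD 1) (bD 0), map_neg, hbD01, hfD 2,
        ← lie_skew (f (bD 1)) (f (bD 0)), hfD 0, hfD 1, hso01]
    | ⟨2,_⟩, ⟨1,_⟩ => show f ⁅bD 2, bD 1⁆ = ⁅f (bD 2), f (bD 1)⁆; rw [← lie_skew (bD 2) (bD 1), map_neg, hbD12, hfD 0,
        ← lie_skew (f (bD 2)) (f (bD 1)), hfD 1, hfD 2, hso12]
    | ⟨0,_⟩, ⟨2,_⟩ => show f ⁅bD 0, bD 2⁆ = ⁅f (bD 0), f (bD 2)⁆; rw [← lie_skew (bD 0) (bD 2), map_neg, hbD20, hfD 1,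
        ← lie_skew (f (bD 0)) (f (bD 2)), hfD 2, hfD 0, hso20]
  have hml : ∀ p q : ↥DI, f ⁅p, q⁆ = ⁅f p, f q⁆ := by
    intro p q
    have e1 : f ⁅∑ i, bD.repr p i • bD i, ∑ j, bD.repr q j • bD j⁆
        = ∑ i, ∑ j, (bD.repr p i * bD.repr q j) • f ⁅bD i, bD j⁆ := by
      rw [lie_expand]
      simp only [map_sum, _root_.map_smul]
    have e2 : ⁅f (∑ i, bD.repr p i • bD i), f (∑ j, bD.repr q j • bD j)⁆
        = ∑ i, ∑ j, (bD.repr p i * bD.repr q j) • ⁅f (bD i), f (bD j)⁆ := by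
      simp only [map_sum, _root_.map_smul]
      rw [lie_expand]
    rw [← bD.sum_repr p, ← bD.sum_repr q, e1, e2]
    exact Finset.sum_congr rfl fun i _ => Finset.sum_congr rfl fun j _ => by rw [htab]
  refine ⟨hfr1, hfr2, ⟨{ f with map_lie' := fun {p q} => hml p q }⟩, ?_, ?_⟩
  · rw [← LieSubmodule.toSubmodule_inj, LieSubmodule.inf_toSubmodule,
      LieSubmodule.bot_toSubmodule, hcenter, hder]
    have himgZ : Set.range (c ∘ gZ) = ⇑cb '' (Set.range gZ) := by rw [Set.range_comp, hcb]
    have himgD : Set.range (c ∘ gD) = ⇑cb '' (Set.range gD) := by rw [Set.range_comp, hcb]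
    have hdisj0 : Disjoint (Set.range gZ) (Set.range gD) := by
      rw [Set.disjoint_left]
      rintro a ⟨p, rfl⟩ ⟨q, hq⟩
      have h' := congrArg Fin.val hq
      simp only [hgZ, hgD] at h'
      omega
    have hdisj := cb.linearIndependent.disjoint_span_image hdisj0
    rw [hSZ, hSD, himgZ, himgD]
    exact disjoint_iff.mp hdisj
  · rw [← LieSubmodule.toSubmodule_inj, LieSubmodule.sup_toSubmodule,
      LieSubmodule.top_toSubmodule, hcenter, hder]
    have himgZ : Set.range (c ∘ gZ) = ⇑cb '' (Set.range gZ) := by rw [Set.range_comp, hcb]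
    have himgD : Set.range (c ∘ gD) = ⇑cb '' (Set.range gD) := by rw [Set.range_comp, hcb]
    rw [hSZ, hSD, himgZ, himgD, ← Submodule.span_union, ← Set.image_union]
    have huniv : Set.range gZ ∪ Set.range gD = Set.univ := by
      rw [Set.eq_univ_iff_forall]
      intro i
      rcases lt_or_ge i.1 3 with h | h
      · exact Or.inl ⟨⟨i.1, h⟩, Fin.ext rfl⟩
      · refine Or.inr ⟨⟨i.1 - 3, by omega⟩, Fin.ext ?_⟩
        simp only [hgD]
        omega
    rw [huniv, Set.image_univ]
    exact cb.span_eq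
end key


end St9

set_option maxHeartbeats 2000000 in
open St9 in
/-- If `x ≠ 0`, `R(x,y) = 0` and `Δ(y) ≠ 0` then `g(x,y)` is the direct sum of its
3-dimensional center and its derived algebra, the latter being isomorphic to `so(3,ℝ)`. -/
theorem stmt9 (x : Fin 2 → ℝ) (y : Fin 3 → ℝ) (hx : x ≠ 0)
    (hR : x 1 ^ 2 * y 0 + x 0 ^ 2 * y 2 - x 0 * x 1 * y 1 = 0)
    (hΔ : y 1 ^ 2 - 4 * y 0 * y 2 ≠ 0)
    (L : Type*) [LieRing L] [LieAlgebra ℝ L] (e : Module.Basis (Fin 6) ℝ L)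
    (he : RealizesGXY x y e) :
    -- (i) the center is 3-dimensional
    Module.finrank ℝ (LieAlgebra.center ℝ L) = 3 ∧
    -- (ii) the derived algebra is 3-dimensional and isomorphic to `so(3,ℝ)`
    Module.finrank ℝ ↥(⁅(⊤ : LieIdeal ℝ L), (⊤ : LieIdeal ℝ L)⁆ : LieIdeal ℝ L) = 3 ∧
    Nonempty (↥(⁅(⊤ : LieIdeal ℝ L), (⊤ : LieIdeal ℝ L)⁆ : LieIdeal ℝ L) ≃ₗ⁅ℝ⁆
      LieAlgebra.Orthogonal.so (Fin 3) ℝ) ∧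
    -- (iii) `L` is the direct sum of the center and the derived algebra
    LieAlgebra.center ℝ L ⊓ ⁅(⊤ : LieIdeal ℝ L), (⊤ : LieIdeal ℝ L)⁆ = ⊥ ∧
    LieAlgebra.center ℝ L ⊔ ⁅(⊤ : LieIdeal ℝ L), (⊤ : LieIdeal ℝ L)⁆ = ⊤ := by
  have hx' : x 0 ≠ 0 ∨ x 1 ≠ 0 := by
    by_contra h
    push_neg at h
    exact hx (funext fun i => match i with | ⟨0,_⟩ => h.1 | ⟨1,_⟩ => h.2)
  rcases hx' with hx0 | hx1
  · -- case x 0 ≠ 0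
    have hy : y 2 = (x 0 * x 1 * y 1 - x 1 ^ 2 * y 0) / x 0 ^ 2 := by
      field_simp
      linear_combination hR
    have h1 : (x 0 * y 1 - 2 * x 1 * y 0) ^ 2 = x 0 ^ 2 * (y 1 ^ 2 - 4 * y 0 * y 2) := by
      linear_combination (4 * y 0) * hR
    have hq : x 0 * y 1 - 2 * x 1 * y 0 ≠ 0 := by
      intro h
      have h2 : (x 0 * y 1 - 2 * x 1 * y 0) ^ 2 ≠ 0 := h1 ▸ mul_ne_zero (pow_ne_zero 2 hx0) hΔ
      exact h2 (by rw [h]; ring)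
    have hdet' : -(x 0 * (x 0 * y 1 - 2 * x 1 * y 0)) ≠ 0 := neg_ne_zero.mpr (mul_ne_zero hx0 hq)
    have hdet : (![-(x 1), x 0] : Fin 2 → ℝ) 0 * (![x 0 * y 1 - x 1 * y 0, -(x 0 * y 0)] : Fin 2 → ℝ) 1
        - (![-(x 1), x 0] : Fin 2 → ℝ) 1 * (![x 0 * y 1 - x 1 * y 0, -(x 0 * y 0)] : Fin 2 → ℝ) 0 ≠ 0 := by
      simp only [cu0, cu1]
      intro hcon
      exact hdet' (by linear_combination hcon)
    have hz0 : ∀ w, brXY x y (sl0 (![-(x 1), x 0] : Fin 2 → ℝ)) w = 0 := by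
      intro w
      have comp0 : (brXY x y (sl0 (![-(x 1), x 0] : Fin 2 → ℝ)) w) 0 = ((0 : Fin 6 → ℝ)) 0 := by
        simp only [brXY, Wpair, sl0, sl1, sl2, Pi.smul_apply, smul_eq_mul, cv0, cv1, cv2, cv3, cv4, cv5, cu0, cu1, Pi.zero_apply]
        first
        | (rw [hy]; field_simp; ring)
        | ring
        | (field_simp; ring)
      have comp1 : (brXY x y (sl0 (![-(x 1), x 0] : Fin 2 → ℝ)) w) 1 = ((0 : Fin 6 → ℝ)) 1 := by
        simp only [brXY, Wpair, sl0, sl1, sl2, Pi.smul_apply, smul_eq_mul, cv0, cv1, cv2, cv3, cv4, cv5, cu0, cu1, Pi.zero_apply]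
        first
        | (rw [hy]; field_simp; ring)
        | ring
        | (field_simp; ring)
      have comp2 : (brXY x y (sl0 (![-(x 1), x 0] : Fin 2 → ℝ)) w) 2 = ((0 : Fin 6 → ℝ)) 2 := by
        simp only [brXY, Wpair, sl0, sl1, sl2, Pi.smul_apply, smul_eq_mul, cv0, cv1, cv2, cv3, cv4, cv5, cu0, cu1, Pi.zero_apply]
        first
        | (rw [hy]; field_simp; ring)
        | ring
        | (field_simp; ring)
      have comp3 : (brXY x y (sl0 (![-(x 1), x 0] : Fin 2 → ℝ)) w) 3 = ((0 : Fin 6 → ℝ)) 3 := by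
        simp only [brXY, Wpair, sl0, sl1, sl2, Pi.smul_apply, smul_eq_mul, cv0, cv1, cv2, cv3, cv4, cv5, cu0, cu1, Pi.zero_apply]
        first
        | (rw [hy]; field_simp; ring)
        | ring
        | (field_simp; ring)
      have comp4 : (brXY x y (sl0 (![-(x 1), x 0] : Fin 2 → ℝ)) w) 4 = ((0 : Fin 6 → ℝ)) 4 := by
        simp only [brXY, Wpair, sl0, sl1, sl2, Pi.smul_apply, smul_eq_mul, cv0, cv1, cv2, cv3, cv4, cv5, cu0, cu1, Pi.zero_apply]
        first
        | (rw [hy]; field_simp; ring)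
        | ring
        | (field_simp; ring)
      have comp5 : (brXY x y (sl0 (![-(x 1), x 0] : Fin 2 → ℝ)) w) 5 = ((0 : Fin 6 → ℝ)) 5 := by
        simp only [brXY, Wpair, sl0, sl1, sl2, Pi.smul_apply, smul_eq_mul, cv0, cv1, cv2, cv3, cv4, cv5, cu0, cu1, Pi.zero_apply]
        first
        | (rw [hy]; field_simp; ring)
        | ring
        | (field_simp; ring)
      exact funext fun k => match k with
      | ⟨0,_⟩ => comp0
      | ⟨1,_⟩ => comp1
      | ⟨2,_⟩ => comp2
      | ⟨3,_⟩ => comp3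
      | ⟨4,_⟩ => comp4
      | ⟨5,_⟩ => comp5
    have hz1 : ∀ w, brXY x y (sl1 (![-(x 1), x 0] : Fin 2 → ℝ)) w = 0 := by
      intro w
      have comp0 : (brXY x y (sl1 (![-(x 1), x 0] : Fin 2 → ℝ)) w) 0 = ((0 : Fin 6 → ℝ)) 0 := by
        simp only [brXY, Wpair, sl0, sl1, sl2, Pi.smul_apply, smul_eq_mul, cv0, cv1, cv2, cv3, cv4, cv5, cu0, cu1, Pi.zero_apply]
        first
        | (rw [hy]; field_simp; ring)
        | ring
        | (field_simp; ring)
      have comp1 : (brXY x y (sl1 (![-(x 1), x 0] : Fin 2 → ℝ)) w) 1 = ((0 : Fin 6 → ℝ)) 1 := by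
        simp only [brXY, Wpair, sl0, sl1, sl2, Pi.smul_apply, smul_eq_mul, cv0, cv1, cv2, cv3, cv4, cv5, cu0, cu1, Pi.zero_apply]
        first
        | (rw [hy]; field_simp; ring)
        | ring
        | (field_simp; ring)
      have comp2 : (brXY x y (sl1 (![-(x 1), x 0] : Fin 2 → ℝ)) w) 2 = ((0 : Fin 6 → ℝ)) 2 := by
        simp only [brXY, Wpair, sl0, sl1, sl2, Pi.smul_apply, smul_eq_mul, cv0, cv1, cv2, cv3, cv4, cv5, cu0, cu1, Pi.zero_apply]
        first
        | (rw [hy]; field_simp; ring)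
        | ring
        | (field_simp; ring)
      have comp3 : (brXY x y (sl1 (![-(x 1), x 0] : Fin 2 → ℝ)) w) 3 = ((0 : Fin 6 → ℝ)) 3 := by
        simp only [brXY, Wpair, sl0, sl1, sl2, Pi.smul_apply, smul_eq_mul, cv0, cv1, cv2, cv3, cv4, cv5, cu0, cu1, Pi.zero_apply]
        first
        | (rw [hy]; field_simp; ring)
        | ring
        | (field_simp; ring)
      have comp4 : (brXY x y (sl1 (![-(x 1), x 0] : Fin 2 → ℝ)) w) 4 = ((0 : Fin 6 → ℝ)) 4 := by
        simp only [brXY, Wpair, sl0, sl1, sl2, Pi.smul_apply, smul_eq_mul, cv0, cv1, cv2, cv3, cv4, cv5, cu0, cu1, Pi.zero_apply]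
        first
        | (rw [hy]; field_simp; ring)
        | ring
        | (field_simp; ring)
      have comp5 : (brXY x y (sl1 (![-(x 1), x 0] : Fin 2 → ℝ)) w) 5 = ((0 : Fin 6 → ℝ)) 5 := by
        simp only [brXY, Wpair, sl0, sl1, sl2, Pi.smul_apply, smul_eq_mul, cv0, cv1, cv2, cv3, cv4, cv5, cu0, cu1, Pi.zero_apply]
        first
        | (rw [hy]; field_simp; ring)
        | ring
        | (field_simp; ring)
      exact funext fun k => match k with
      | ⟨0,_⟩ => comp0
      | ⟨1,_⟩ => comp1
      | ⟨2,_⟩ => comp2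
      | ⟨3,_⟩ => comp3
      | ⟨4,_⟩ => comp4
      | ⟨5,_⟩ => comp5
    have hz2 : ∀ w, brXY x y (sl2 (![-(x 1), x 0] : Fin 2 → ℝ)) w = 0 := by
      intro w
      have comp0 : (brXY x y (sl2 (![-(x 1), x 0] : Fin 2 → ℝ)) w) 0 = ((0 : Fin 6 → ℝ)) 0 := by
        simp only [brXY, Wpair, sl0, sl1, sl2, Pi.smul_apply, smul_eq_mul, cv0, cv1, cv2, cv3, cv4, cv5, cu0, cu1, Pi.zero_apply]
        first
        | (rw [hy]; field_simp; ring)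
        | ring
        | (field_simp; ring)
      have comp1 : (brXY x y (sl2 (![-(x 1), x 0] : Fin 2 → ℝ)) w) 1 = ((0 : Fin 6 → ℝ)) 1 := by
        simp only [brXY, Wpair, sl0, sl1, sl2, Pi.smul_apply, smul_eq_mul, cv0, cv1, cv2, cv3, cv4, cv5, cu0, cu1, Pi.zero_apply]
        first
        | (rw [hy]; field_simp; ring)
        | ring
        | (field_simp; ring)
      have comp2 : (brXY x y (sl2 (![-(x 1), x 0] : Fin 2 → ℝ)) w) 2 = ((0 : Fin 6 → ℝ)) 2 := by
        simp only [brXY, Wpair, sl0, sl1, sl2, Pi.smul_apply, smul_eq_mul, cv0, cv1, cv2, cv3, cv4, cv5, cu0, cu1, Pi.zero_apply]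
        first
        | (rw [hy]; field_simp; ring)
        | ring
        | (field_simp; ring)
      have comp3 : (brXY x y (sl2 (![-(x 1), x 0] : Fin 2 → ℝ)) w) 3 = ((0 : Fin 6 → ℝ)) 3 := by
        simp only [brXY, Wpair, sl0, sl1, sl2, Pi.smul_apply, smul_eq_mul, cv0, cv1, cv2, cv3, cv4, cv5, cu0, cu1, Pi.zero_apply]
        first
        | (rw [hy]; field_simp; ring)
        | ring
        | (field_simp; ring)
      have comp4 : (brXY x y (sl2 (![-(x 1), x 0] : Fin 2 → ℝ)) w) 4 = ((0 : Fin 6 → ℝ)) 4 := by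
        simp only [brXY, Wpair, sl0, sl1, sl2, Pi.smul_apply, smul_eq_mul, cv0, cv1, cv2, cv3, cv4, cv5, cu0, cu1, Pi.zero_apply]
        first
        | (rw [hy]; field_simp; ring)
        | ring
        | (field_simp; ring)
      have comp5 : (brXY x y (sl2 (![-(x 1), x 0] : Fin 2 → ℝ)) w) 5 = ((0 : Fin 6 → ℝ)) 5 := by
        simp only [brXY, Wpair, sl0, sl1, sl2, Pi.smul_apply, smul_eq_mul, cv0, cv1, cv2, cv3, cv4, cv5, cu0, cu1, Pi.zero_apply]
        first
        | (rw [hy]; field_simp; ring)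
        | ring
        | (field_simp; ring)
      exact funext fun k => match k with
      | ⟨0,_⟩ => comp0
      | ⟨1,_⟩ => comp1
      | ⟨2,_⟩ => comp2
      | ⟨3,_⟩ => comp3
      | ⟨4,_⟩ => comp4
      | ⟨5,_⟩ => comp5
    have hd01 : brXY x y (sl0 (![x 0 * y 1 - x 1 * y 0, -(x 0 * y 0)] : Fin 2 → ℝ)) (sl1 (![x 0 * y 1 - x 1 * y 0, -(x 0 * y 0)] : Fin 2 → ℝ))
        = ((x 0 * y 1 - 2 * x 1 * y 0) ^ 2) • sl2 (![x 0 * y 1 - x 1 * y 0, -(x 0 * y 0)] : Fin 2 → ℝ) := by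
      have comp0 : (brXY x y (sl0 (![x 0 * y 1 - x 1 * y 0, -(x 0 * y 0)] : Fin 2 → ℝ)) (sl1 (![x 0 * y 1 - x 1 * y 0, -(x 0 * y 0)] : Fin 2 → ℝ))) 0 = (((x 0 * y 1 - 2 * x 1 * y 0) ^ 2) • sl2 (![x 0 * y 1 - x 1 * y 0, -(x 0 * y 0)] : Fin 2 → ℝ)) 0 := by
        simp only [brXY, Wpair, sl0, sl1, sl2, Pi.smul_apply, smul_eq_mul, cv0, cv1, cv2, cv3, cv4, cv5, cu0, cu1, Pi.zero_apply]
        first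
        | (rw [hy]; field_simp; ring)
        | ring
        | (field_simp; ring)
      have comp1 : (brXY x y (sl0 (![x 0 * y 1 - x 1 * y 0, -(x 0 * y 0)] : Fin 2 → ℝ)) (sl1 (![x 0 * y 1 - x 1 * y 0, -(x 0 * y 0)] : Fin 2 → ℝ))) 1 = (((x 0 * y 1 - 2 * x 1 * y 0) ^ 2) • sl2 (![x 0 * y 1 - x 1 * y 0, -(x 0 * y 0)] : Fin 2 → ℝ)) 1 := by
        simp only [brXY, Wpair, sl0, sl1, sl2, Pi.smul_apply, smul_eq_mul, cv0, cv1, cv2, cv3, cv4, cv5, cu0, cu1, Pi.zero_apply]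
        first
        | (rw [hy]; field_simp; ring)
        | ring
        | (field_simp; ring)
      have comp2 : (brXY x y (sl0 (![x 0 * y 1 - x 1 * y 0, -(x 0 * y 0)] : Fin 2 → ℝ)) (sl1 (![x 0 * y 1 - x 1 * y 0, -(x 0 * y 0)] : Fin 2 → ℝ))) 2 = (((x 0 * y 1 - 2 * x 1 * y 0) ^ 2) • sl2 (![x 0 * y 1 - x 1 * y 0, -(x 0 * y 0)] : Fin 2 → ℝ)) 2 := by
        simp only [brXY, Wpair, sl0, sl1, sl2, Pi.smul_apply, smul_eq_mul, cv0, cv1, cv2, cv3, cv4, cv5, cu0, cu1, Pi.zero_apply]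
        first
        | (rw [hy]; field_simp; ring)
        | ring
        | (field_simp; ring)
      have comp3 : (brXY x y (sl0 (![x 0 * y 1 - x 1 * y 0, -(x 0 * y 0)] : Fin 2 → ℝ)) (sl1 (![x 0 * y 1 - x 1 * y 0, -(x 0 * y 0)] : Fin 2 → ℝ))) 3 = (((x 0 * y 1 - 2 * x 1 * y 0) ^ 2) • sl2 (![x 0 * y 1 - x 1 * y 0, -(x 0 * y 0)] : Fin 2 → ℝ)) 3 := by
        simp only [brXY, Wpair, sl0, sl1, sl2, Pi.smul_apply, smul_eq_mul, cv0, cv1, cv2, cv3, cv4, cv5, cu0, cu1, Pi.zero_apply]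
        first
        | (rw [hy]; field_simp; ring)
        | ring
        | (field_simp; ring)
      have comp4 : (brXY x y (sl0 (![x 0 * y 1 - x 1 * y 0, -(x 0 * y 0)] : Fin 2 → ℝ)) (sl1 (![x 0 * y 1 - x 1 * y 0, -(x 0 * y 0)] : Fin 2 → ℝ))) 4 = (((x 0 * y 1 - 2 * x 1 * y 0) ^ 2) • sl2 (![x 0 * y 1 - x 1 * y 0, -(x 0 * y 0)] : Fin 2 → ℝ)) 4 := by
        simp only [brXY, Wpair, sl0, sl1, sl2, Pi.smul_apply, smul_eq_mul, cv0, cv1, cv2, cv3, cv4, cv5, cu0, cu1, Pi.zero_apply]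
        first
        | (rw [hy]; field_simp; ring)
        | ring
        | (field_simp; ring)
      have comp5 : (brXY x y (sl0 (![x 0 * y 1 - x 1 * y 0, -(x 0 * y 0)] : Fin 2 → ℝ)) (sl1 (![x 0 * y 1 - x 1 * y 0, -(x 0 * y 0)] : Fin 2 → ℝ))) 5 = (((x 0 * y 1 - 2 * x 1 * y 0) ^ 2) • sl2 (![x 0 * y 1 - x 1 * y 0, -(x 0 * y 0)] : Fin 2 → ℝ)) 5 := by
        simp only [brXY, Wpair, sl0, sl1, sl2, Pi.smul_apply, smul_eq_mul, cv0, cv1, cv2, cv3, cv4, cv5, cu0, cu1, Pi.zero_apply]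
        first
        | (rw [hy]; field_simp; ring)
        | ring
        | (field_simp; ring)
      exact funext fun k => match k with
      | ⟨0,_⟩ => comp0
      | ⟨1,_⟩ => comp1
      | ⟨2,_⟩ => comp2
      | ⟨3,_⟩ => comp3
      | ⟨4,_⟩ => comp4
      | ⟨5,_⟩ => comp5
    have hd12 : brXY x y (sl1 (![x 0 * y 1 - x 1 * y 0, -(x 0 * y 0)] : Fin 2 → ℝ)) (sl2 (![x 0 * y 1 - x 1 * y 0, -(x 0 * y 0)] : Fin 2 → ℝ))
        = ((x 0 * y 1 - 2 * x 1 * y 0) ^ 2) • sl0 (![x 0 * y 1 - x 1 * y 0, -(x 0 * y 0)] : Fin 2 → ℝ) := by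
      have comp0 : (brXY x y (sl1 (![x 0 * y 1 - x 1 * y 0, -(x 0 * y 0)] : Fin 2 → ℝ)) (sl2 (![x 0 * y 1 - x 1 * y 0, -(x 0 * y 0)] : Fin 2 → ℝ))) 0 = (((x 0 * y 1 - 2 * x 1 * y 0) ^ 2) • sl0 (![x 0 * y 1 - x 1 * y 0, -(x 0 * y 0)] : Fin 2 → ℝ)) 0 := by
        simp only [brXY, Wpair, sl0, sl1, sl2, Pi.smul_apply, smul_eq_mul, cv0, cv1, cv2, cv3, cv4, cv5, cu0, cu1, Pi.zero_apply]
        first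
        | (rw [hy]; field_simp; ring)
        | ring
        | (field_simp; ring)
      have comp1 : (brXY x y (sl1 (![x 0 * y 1 - x 1 * y 0, -(x 0 * y 0)] : Fin 2 → ℝ)) (sl2 (![x 0 * y 1 - x 1 * y 0, -(x 0 * y 0)] : Fin 2 → ℝ))) 1 = (((x 0 * y 1 - 2 * x 1 * y 0) ^ 2) • sl0 (![x 0 * y 1 - x 1 * y 0, -(x 0 * y 0)] : Fin 2 → ℝ)) 1 := by
        simp only [brXY, Wpair, sl0, sl1, sl2, Pi.smul_apply, smul_eq_mul, cv0, cv1, cv2, cv3, cv4, cv5, cu0, cu1, Pi.zero_apply]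
        first
        | (rw [hy]; field_simp; ring)
        | ring
        | (field_simp; ring)
      have comp2 : (brXY x y (sl1 (![x 0 * y 1 - x 1 * y 0, -(x 0 * y 0)] : Fin 2 → ℝ)) (sl2 (![x 0 * y 1 - x 1 * y 0, -(x 0 * y 0)] : Fin 2 → ℝ))) 2 = (((x 0 * y 1 - 2 * x 1 * y 0) ^ 2) • sl0 (![x 0 * y 1 - x 1 * y 0, -(x 0 * y 0)] : Fin 2 → ℝ)) 2 := by
        simp only [brXY, Wpair, sl0, sl1, sl2, Pi.smul_apply, smul_eq_mul, cv0, cv1, cv2, cv3, cv4, cv5, cu0, cu1, Pi.zero_apply]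
        first
        | (rw [hy]; field_simp; ring)
        | ring
        | (field_simp; ring)
      have comp3 : (brXY x y (sl1 (![x 0 * y 1 - x 1 * y 0, -(x 0 * y 0)] : Fin 2 → ℝ)) (sl2 (![x 0 * y 1 - x 1 * y 0, -(x 0 * y 0)] : Fin 2 → ℝ))) 3 = (((x 0 * y 1 - 2 * x 1 * y 0) ^ 2) • sl0 (![x 0 * y 1 - x 1 * y 0, -(x 0 * y 0)] : Fin 2 → ℝ)) 3 := by
        simp only [brXY, Wpair, sl0, sl1, sl2, Pi.smul_apply, smul_eq_mul, cv0, cv1, cv2, cv3, cv4, cv5, cu0, cu1, Pi.zero_apply]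
        first
        | (rw [hy]; field_simp; ring)
        | ring
        | (field_simp; ring)
      have comp4 : (brXY x y (sl1 (![x 0 * y 1 - x 1 * y 0, -(x 0 * y 0)] : Fin 2 → ℝ)) (sl2 (![x 0 * y 1 - x 1 * y 0, -(x 0 * y 0)] : Fin 2 → ℝ))) 4 = (((x 0 * y 1 - 2 * x 1 * y 0) ^ 2) • sl0 (![x 0 * y 1 - x 1 * y 0, -(x 0 * y 0)] : Fin 2 → ℝ)) 4 := by
        simp only [brXY, Wpair, sl0, sl1, sl2, Pi.smul_apply, smul_eq_mul, cv0, cv1, cv2, cv3, cv4, cv5, cu0, cu1, Pi.zero_apply]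
        first
        | (rw [hy]; field_simp; ring)
        | ring
        | (field_simp; ring)
      have comp5 : (brXY x y (sl1 (![x 0 * y 1 - x 1 * y 0, -(x 0 * y 0)] : Fin 2 → ℝ)) (sl2 (![x 0 * y 1 - x 1 * y 0, -(x 0 * y 0)] : Fin 2 → ℝ))) 5 = (((x 0 * y 1 - 2 * x 1 * y 0) ^ 2) • sl0 (![x 0 * y 1 - x 1 * y 0, -(x 0 * y 0)] : Fin 2 → ℝ)) 5 := by
        simp only [brXY, Wpair, sl0, sl1, sl2, Pi.smul_apply, smul_eq_mul, cv0, cv1, cv2, cv3, cv4, cv5, cu0, cu1, Pi.zero_apply]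
        first
        | (rw [hy]; field_simp; ring)
        | ring
        | (field_simp; ring)
      exact funext fun k => match k with
      | ⟨0,_⟩ => comp0
      | ⟨1,_⟩ => comp1
      | ⟨2,_⟩ => comp2
      | ⟨3,_⟩ => comp3
      | ⟨4,_⟩ => comp4
      | ⟨5,_⟩ => comp5
    have hd20 : brXY x y (sl2 (![x 0 * y 1 - x 1 * y 0, -(x 0 * y 0)] : Fin 2 → ℝ)) (sl0 (![x 0 * y 1 - x 1 * y 0, -(x 0 * y 0)] : Fin 2 → ℝ))
        = ((x 0 * y 1 - 2 * x 1 * y 0) ^ 2) • sl1 (![x 0 * y 1 - x 1 * y 0, -(x 0 * y 0)] : Fin 2 → ℝ) := by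
      have comp0 : (brXY x y (sl2 (![x 0 * y 1 - x 1 * y 0, -(x 0 * y 0)] : Fin 2 → ℝ)) (sl0 (![x 0 * y 1 - x 1 * y 0, -(x 0 * y 0)] : Fin 2 → ℝ))) 0 = (((x 0 * y 1 - 2 * x 1 * y 0) ^ 2) • sl1 (![x 0 * y 1 - x 1 * y 0, -(x 0 * y 0)] : Fin 2 → ℝ)) 0 := by
        simp only [brXY, Wpair, sl0, sl1, sl2, Pi.smul_apply, smul_eq_mul, cv0, cv1, cv2, cv3, cv4, cv5, cu0, cu1, Pi.zero_apply]
        first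
        | (rw [hy]; field_simp; ring)
        | ring
        | (field_simp; ring)
      have comp1 : (brXY x y (sl2 (![x 0 * y 1 - x 1 * y 0, -(x 0 * y 0)] : Fin 2 → ℝ)) (sl0 (![x 0 * y 1 - x 1 * y 0, -(x 0 * y 0)] : Fin 2 → ℝ))) 1 = (((x 0 * y 1 - 2 * x 1 * y 0) ^ 2) • sl1 (![x 0 * y 1 - x 1 * y 0, -(x 0 * y 0)] : Fin 2 → ℝ)) 1 := by
        simp only [brXY, Wpair, sl0, sl1, sl2, Pi.smul_apply, smul_eq_mul, cv0, cv1, cv2, cv3, cv4, cv5, cu0, cu1, Pi.zero_apply]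
        first
        | (rw [hy]; field_simp; ring)
        | ring
        | (field_simp; ring)
      have comp2 : (brXY x y (sl2 (![x 0 * y 1 - x 1 * y 0, -(x 0 * y 0)] : Fin 2 → ℝ)) (sl0 (![x 0 * y 1 - x 1 * y 0, -(x 0 * y 0)] : Fin 2 → ℝ))) 2 = (((x 0 * y 1 - 2 * x 1 * y 0) ^ 2) • sl1 (![x 0 * y 1 - x 1 * y 0, -(x 0 * y 0)] : Fin 2 → ℝ)) 2 := by
        simp only [brXY, Wpair, sl0, sl1, sl2, Pi.smul_apply, smul_eq_mul, cv0, cv1, cv2, cv3, cv4, cv5, cu0, cu1, Pi.zero_apply]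
        first
        | (rw [hy]; field_simp; ring)
        | ring
        | (field_simp; ring)
      have comp3 : (brXY x y (sl2 (![x 0 * y 1 - x 1 * y 0, -(x 0 * y 0)] : Fin 2 → ℝ)) (sl0 (![x 0 * y 1 - x 1 * y 0, -(x 0 * y 0)] : Fin 2 → ℝ))) 3 = (((x 0 * y 1 - 2 * x 1 * y 0) ^ 2) • sl1 (![x 0 * y 1 - x 1 * y 0, -(x 0 * y 0)] : Fin 2 → ℝ)) 3 := by
        simp only [brXY, Wpair, sl0, sl1, sl2, Pi.smul_apply, smul_eq_mul, cv0, cv1, cv2, cv3, cv4, cv5, cu0, cu1, Pi.zero_apply]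
        first
        | (rw [hy]; field_simp; ring)
        | ring
        | (field_simp; ring)
      have comp4 : (brXY x y (sl2 (![x 0 * y 1 - x 1 * y 0, -(x 0 * y 0)] : Fin 2 → ℝ)) (sl0 (![x 0 * y 1 - x 1 * y 0, -(x 0 * y 0)] : Fin 2 → ℝ))) 4 = (((x 0 * y 1 - 2 * x 1 * y 0) ^ 2) • sl1 (![x 0 * y 1 - x 1 * y 0, -(x 0 * y 0)] : Fin 2 → ℝ)) 4 := by
        simp only [brXY, Wpair, sl0, sl1, sl2, Pi.smul_apply, smul_eq_mul, cv0, cv1, cv2, cv3, cv4, cv5, cu0, cu1, Pi.zero_apply]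
        first
        | (rw [hy]; field_simp; ring)
        | ring
        | (field_simp; ring)
      have comp5 : (brXY x y (sl2 (![x 0 * y 1 - x 1 * y 0, -(x 0 * y 0)] : Fin 2 → ℝ)) (sl0 (![x 0 * y 1 - x 1 * y 0, -(x 0 * y 0)] : Fin 2 → ℝ))) 5 = (((x 0 * y 1 - 2 * x 1 * y 0) ^ 2) • sl1 (![x 0 * y 1 - x 1 * y 0, -(x 0 * y 0)] : Fin 2 → ℝ)) 5 := by
        simp only [brXY, Wpair, sl0, sl1, sl2, Pi.smul_apply, smul_eq_mul, cv0, cv1, cv2, cv3, cv4, cv5, cu0, cu1, Pi.zero_apply]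
        first
        | (rw [hy]; field_simp; ring)
        | ring
        | (field_simp; ring)
      exact funext fun k => match k with
      | ⟨0,_⟩ => comp0
      | ⟨1,_⟩ => comp1
      | ⟨2,_⟩ => comp2
      | ⟨3,_⟩ => comp3
      | ⟨4,_⟩ => comp4
      | ⟨5,_⟩ => comp5
    exact key x y e he (![-(x 1), x 0]) (![x 0 * y 1 - x 1 * y 0, -(x 0 * y 0)]) ((x 0 * y 1 - 2 * x 1 * y 0) ^ 2) (pow_ne_zero 2 hq) hdet hz0 hz1 hz2 hd01 hd12 hd20
  · -- case x 1 ≠ 0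
    have hy : y 0 = (x 0 * x 1 * y 1 - x 0 ^ 2 * y 2) / x 1 ^ 2 := by
      field_simp
      linear_combination hR
    have h1 : (x 1 * y 1 - 2 * x 0 * y 2) ^ 2 = x 1 ^ 2 * (y 1 ^ 2 - 4 * y 0 * y 2) := by
      linear_combination (4 * y 2) * hR
    have hq : x 1 * y 1 - 2 * x 0 * y 2 ≠ 0 := by
      intro h
      have h2 : (x 1 * y 1 - 2 * x 0 * y 2) ^ 2 ≠ 0 := h1 ▸ mul_ne_zero (pow_ne_zero 2 hx1) hΔ
      exact h2 (by rw [h]; ring)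
    have hdet' : x 1 * (x 1 * y 1 - 2 * x 0 * y 2) ≠ 0 := mul_ne_zero hx1 hq
    have hdet : (![-(x 1), x 0] : Fin 2 → ℝ) 0 * (![x 1 * y 2, x 0 * y 2 - x 1 * y 1] : Fin 2 → ℝ) 1
        - (![-(x 1), x 0] : Fin 2 → ℝ) 1 * (![x 1 * y 2, x 0 * y 2 - x 1 * y 1] : Fin 2 → ℝ) 0 ≠ 0 := by
      simp only [cu0, cu1]
      intro hcon
      exact hdet' (by linear_combination hcon)
    have hz0 : ∀ w, brXY x y (sl0 (![-(x 1), x 0] : Fin 2 → ℝ)) w = 0 := by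
      intro w
      have comp0 : (brXY x y (sl0 (![-(x 1), x 0] : Fin 2 → ℝ)) w) 0 = ((0 : Fin 6 → ℝ)) 0 := by
        simp only [brXY, Wpair, sl0, sl1, sl2, Pi.smul_apply, smul_eq_mul, cv0, cv1, cv2, cv3, cv4, cv5, cu0, cu1, Pi.zero_apply]
        first
        | (rw [hy]; field_simp; ring)
        | ring
        | (field_simp; ring)
      have comp1 : (brXY x y (sl0 (![-(x 1), x 0] : Fin 2 → ℝ)) w) 1 = ((0 : Fin 6 → ℝ)) 1 := by
        simp only [brXY, Wpair, sl0, sl1, sl2, Pi.smul_apply, smul_eq_mul, cv0, cv1, cv2, cv3, cv4, cv5, cu0, cu1, Pi.zero_apply]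
        first
        | (rw [hy]; field_simp; ring)
        | ring
        | (field_simp; ring)
      have comp2 : (brXY x y (sl0 (![-(x 1), x 0] : Fin 2 → ℝ)) w) 2 = ((0 : Fin 6 → ℝ)) 2 := by
        simp only [brXY, Wpair, sl0, sl1, sl2, Pi.smul_apply, smul_eq_mul, cv0, cv1, cv2, cv3, cv4, cv5, cu0, cu1, Pi.zero_apply]
        first
        | (rw [hy]; field_simp; ring)
        | ring
        | (field_simp; ring)
      have comp3 : (brXY x y (sl0 (![-(x 1), x 0] : Fin 2 → ℝ)) w) 3 = ((0 : Fin 6 → ℝ)) 3 := by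
        simp only [brXY, Wpair, sl0, sl1, sl2, Pi.smul_apply, smul_eq_mul, cv0, cv1, cv2, cv3, cv4, cv5, cu0, cu1, Pi.zero_apply]
        first
        | (rw [hy]; field_simp; ring)
        | ring
        | (field_simp; ring)
      have comp4 : (brXY x y (sl0 (![-(x 1), x 0] : Fin 2 → ℝ)) w) 4 = ((0 : Fin 6 → ℝ)) 4 := by
        simp only [brXY, Wpair, sl0, sl1, sl2, Pi.smul_apply, smul_eq_mul, cv0, cv1, cv2, cv3, cv4, cv5, cu0, cu1, Pi.zero_apply]
        first
        | (rw [hy]; field_simp; ring)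
        | ring
        | (field_simp; ring)
      have comp5 : (brXY x y (sl0 (![-(x 1), x 0] : Fin 2 → ℝ)) w) 5 = ((0 : Fin 6 → ℝ)) 5 := by
        simp only [brXY, Wpair, sl0, sl1, sl2, Pi.smul_apply, smul_eq_mul, cv0, cv1, cv2, cv3, cv4, cv5, cu0, cu1, Pi.zero_apply]
        first
        | (rw [hy]; field_simp; ring)
        | ring
        | (field_simp; ring)
      exact funext fun k => match k with
      | ⟨0,_⟩ => comp0
      | ⟨1,_⟩ => comp1
      | ⟨2,_⟩ => comp2
      | ⟨3,_⟩ => comp3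
      | ⟨4,_⟩ => comp4
      | ⟨5,_⟩ => comp5
    have hz1 : ∀ w, brXY x y (sl1 (![-(x 1), x 0] : Fin 2 → ℝ)) w = 0 := by
      intro w
      have comp0 : (brXY x y (sl1 (![-(x 1), x 0] : Fin 2 → ℝ)) w) 0 = ((0 : Fin 6 → ℝ)) 0 := by
        simp only [brXY, Wpair, sl0, sl1, sl2, Pi.smul_apply, smul_eq_mul, cv0, cv1, cv2, cv3, cv4, cv5, cu0, cu1, Pi.zero_apply]
        first
        | (rw [hy]; field_simp; ring)
        | ring
        | (field_simp; ring)
      have comp1 : (brXY x y (sl1 (![-(x 1), x 0] : Fin 2 → ℝ)) w) 1 = ((0 : Fin 6 → ℝ)) 1 := by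
        simp only [brXY, Wpair, sl0, sl1, sl2, Pi.smul_apply, smul_eq_mul, cv0, cv1, cv2, cv3, cv4, cv5, cu0, cu1, Pi.zero_apply]
        first
        | (rw [hy]; field_simp; ring)
        | ring
        | (field_simp; ring)
      have comp2 : (brXY x y (sl1 (![-(x 1), x 0] : Fin 2 → ℝ)) w) 2 = ((0 : Fin 6 → ℝ)) 2 := by
        simp only [brXY, Wpair, sl0, sl1, sl2, Pi.smul_apply, smul_eq_mul, cv0, cv1, cv2, cv3, cv4, cv5, cu0, cu1, Pi.zero_apply]
        first
        | (rw [hy]; field_simp; ring)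
        | ring
        | (field_simp; ring)
      have comp3 : (brXY x y (sl1 (![-(x 1), x 0] : Fin 2 → ℝ)) w) 3 = ((0 : Fin 6 → ℝ)) 3 := by
        simp only [brXY, Wpair, sl0, sl1, sl2, Pi.smul_apply, smul_eq_mul, cv0, cv1, cv2, cv3, cv4, cv5, cu0, cu1, Pi.zero_apply]
        first
        | (rw [hy]; field_simp; ring)
        | ring
        | (field_simp; ring)
      have comp4 : (brXY x y (sl1 (![-(x 1), x 0] : Fin 2 → ℝ)) w) 4 = ((0 : Fin 6 → ℝ)) 4 := by
        simp only [brXY, Wpair, sl0, sl1, sl2, Pi.smul_apply, smul_eq_mul, cv0, cv1, cv2, cv3, cv4, cv5, cu0, cu1, Pi.zero_apply]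
        first
        | (rw [hy]; field_simp; ring)
        | ring
        | (field_simp; ring)
      have comp5 : (brXY x y (sl1 (![-(x 1), x 0] : Fin 2 → ℝ)) w) 5 = ((0 : Fin 6 → ℝ)) 5 := by
        simp only [brXY, Wpair, sl0, sl1, sl2, Pi.smul_apply, smul_eq_mul, cv0, cv1, cv2, cv3, cv4, cv5, cu0, cu1, Pi.zero_apply]
        first
        | (rw [hy]; field_simp; ring)
        | ring
        | (field_simp; ring)
      exact funext fun k => match k with
      | ⟨0,_⟩ => comp0
      | ⟨1,_⟩ => comp1
      | ⟨2,_⟩ => comp2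
      | ⟨3,_⟩ => comp3
      | ⟨4,_⟩ => comp4
      | ⟨5,_⟩ => comp5
    have hz2 : ∀ w, brXY x y (sl2 (![-(x 1), x 0] : Fin 2 → ℝ)) w = 0 := by
      intro w
      have comp0 : (brXY x y (sl2 (![-(x 1), x 0] : Fin 2 → ℝ)) w) 0 = ((0 : Fin 6 → ℝ)) 0 := by
        simp only [brXY, Wpair, sl0, sl1, sl2, Pi.smul_apply, smul_eq_mul, cv0, cv1, cv2, cv3, cv4, cv5, cu0, cu1, Pi.zero_apply]
        first
        | (rw [hy]; field_simp; ring)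
        | ring
        | (field_simp; ring)
      have comp1 : (brXY x y (sl2 (![-(x 1), x 0] : Fin 2 → ℝ)) w) 1 = ((0 : Fin 6 → ℝ)) 1 := by
        simp only [brXY, Wpair, sl0, sl1, sl2, Pi.smul_apply, smul_eq_mul, cv0, cv1, cv2, cv3, cv4, cv5, cu0, cu1, Pi.zero_apply]
        first
        | (rw [hy]; field_simp; ring)
        | ring
        | (field_simp; ring)
      have comp2 : (brXY x y (sl2 (![-(x 1), x 0] : Fin 2 → ℝ)) w) 2 = ((0 : Fin 6 → ℝ)) 2 := by
        simp only [brXY, Wpair, sl0, sl1, sl2, Pi.smul_apply, smul_eq_mul, cv0, cv1, cv2, cv3, cv4, cv5, cu0, cu1, Pi.zero_apply]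
        first
        | (rw [hy]; field_simp; ring)
        | ring
        | (field_simp; ring)
      have comp3 : (brXY x y (sl2 (![-(x 1), x 0] : Fin 2 → ℝ)) w) 3 = ((0 : Fin 6 → ℝ)) 3 := by
        simp only [brXY, Wpair, sl0, sl1, sl2, Pi.smul_apply, smul_eq_mul, cv0, cv1, cv2, cv3, cv4, cv5, cu0, cu1, Pi.zero_apply]
        first
        | (rw [hy]; field_simp; ring)
        | ring
        | (field_simp; ring)
      have comp4 : (brXY x y (sl2 (![-(x 1), x 0] : Fin 2 → ℝ)) w) 4 = ((0 : Fin 6 → ℝ)) 4 := by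
        simp only [brXY, Wpair, sl0, sl1, sl2, Pi.smul_apply, smul_eq_mul, cv0, cv1, cv2, cv3, cv4, cv5, cu0, cu1, Pi.zero_apply]
        first
        | (rw [hy]; field_simp; ring)
        | ring
        | (field_simp; ring)
      have comp5 : (brXY x y (sl2 (![-(x 1), x 0] : Fin 2 → ℝ)) w) 5 = ((0 : Fin 6 → ℝ)) 5 := by
        simp only [brXY, Wpair, sl0, sl1, sl2, Pi.smul_apply, smul_eq_mul, cv0, cv1, cv2, cv3, cv4, cv5, cu0, cu1, Pi.zero_apply]
        first
        | (rw [hy]; field_simp; ring)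
        | ring
        | (field_simp; ring)
      exact funext fun k => match k with
      | ⟨0,_⟩ => comp0
      | ⟨1,_⟩ => comp1
      | ⟨2,_⟩ => comp2
      | ⟨3,_⟩ => comp3
      | ⟨4,_⟩ => comp4
      | ⟨5,_⟩ => comp5
    have hd01 : brXY x y (sl0 (![x 1 * y 2, x 0 * y 2 - x 1 * y 1] : Fin 2 → ℝ)) (sl1 (![x 1 * y 2, x 0 * y 2 - x 1 * y 1] : Fin 2 → ℝ))
        = ((x 1 * y 1 - 2 * x 0 * y 2) ^ 2) • sl2 (![x 1 * y 2, x 0 * y 2 - x 1 * y 1] : Fin 2 → ℝ) := by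
      have comp0 : (brXY x y (sl0 (![x 1 * y 2, x 0 * y 2 - x 1 * y 1] : Fin 2 → ℝ)) (sl1 (![x 1 * y 2, x 0 * y 2 - x 1 * y 1] : Fin 2 → ℝ))) 0 = (((x 1 * y 1 - 2 * x 0 * y 2) ^ 2) • sl2 (![x 1 * y 2, x 0 * y 2 - x 1 * y 1] : Fin 2 → ℝ)) 0 := by
        simp only [brXY, Wpair, sl0, sl1, sl2, Pi.smul_apply, smul_eq_mul, cv0, cv1, cv2, cv3, cv4, cv5, cu0, cu1, Pi.zero_apply]
        first
        | (rw [hy]; field_simp; ring)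
        | ring
        | (field_simp; ring)
      have comp1 : (brXY x y (sl0 (![x 1 * y 2, x 0 * y 2 - x 1 * y 1] : Fin 2 → ℝ)) (sl1 (![x 1 * y 2, x 0 * y 2 - x 1 * y 1] : Fin 2 → ℝ))) 1 = (((x 1 * y 1 - 2 * x 0 * y 2) ^ 2) • sl2 (![x 1 * y 2, x 0 * y 2 - x 1 * y 1] : Fin 2 → ℝ)) 1 := by
        simp only [brXY, Wpair, sl0, sl1, sl2, Pi.smul_apply, smul_eq_mul, cv0, cv1, cv2, cv3, cv4, cv5, cu0, cu1, Pi.zero_apply]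
        first
        | (rw [hy]; field_simp; ring)
        | ring
        | (field_simp; ring)
      have comp2 : (brXY x y (sl0 (![x 1 * y 2, x 0 * y 2 - x 1 * y 1] : Fin 2 → ℝ)) (sl1 (![x 1 * y 2, x 0 * y 2 - x 1 * y 1] : Fin 2 → ℝ))) 2 = (((x 1 * y 1 - 2 * x 0 * y 2) ^ 2) • sl2 (![x 1 * y 2, x 0 * y 2 - x 1 * y 1] : Fin 2 → ℝ)) 2 := by
        simp only [brXY, Wpair, sl0, sl1, sl2, Pi.smul_apply, smul_eq_mul, cv0, cv1, cv2, cv3, cv4, cv5, cu0, cu1, Pi.zero_apply]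
        first
        | (rw [hy]; field_simp; ring)
        | ring
        | (field_simp; ring)
      have comp3 : (brXY x y (sl0 (![x 1 * y 2, x 0 * y 2 - x 1 * y 1] : Fin 2 → ℝ)) (sl1 (![x 1 * y 2, x 0 * y 2 - x 1 * y 1] : Fin 2 → ℝ))) 3 = (((x 1 * y 1 - 2 * x 0 * y 2) ^ 2) • sl2 (![x 1 * y 2, x 0 * y 2 - x 1 * y 1] : Fin 2 → ℝ)) 3 := by
        simp only [brXY, Wpair, sl0, sl1, sl2, Pi.smul_apply, smul_eq_mul, cv0, cv1, cv2, cv3, cv4, cv5, cu0, cu1, Pi.zero_apply]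
        first
        | (rw [hy]; field_simp; ring)
        | ring
        | (field_simp; ring)
      have comp4 : (brXY x y (sl0 (![x 1 * y 2, x 0 * y 2 - x 1 * y 1] : Fin 2 → ℝ)) (sl1 (![x 1 * y 2, x 0 * y 2 - x 1 * y 1] : Fin 2 → ℝ))) 4 = (((x 1 * y 1 - 2 * x 0 * y 2) ^ 2) • sl2 (![x 1 * y 2, x 0 * y 2 - x 1 * y 1] : Fin 2 → ℝ)) 4 := by
        simp only [brXY, Wpair, sl0, sl1, sl2, Pi.smul_apply, smul_eq_mul, cv0, cv1, cv2, cv3, cv4, cv5, cu0, cu1, Pi.zero_apply]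
        first
        | (rw [hy]; field_simp; ring)
        | ring
        | (field_simp; ring)
      have comp5 : (brXY x y (sl0 (![x 1 * y 2, x 0 * y 2 - x 1 * y 1] : Fin 2 → ℝ)) (sl1 (![x 1 * y 2, x 0 * y 2 - x 1 * y 1] : Fin 2 → ℝ))) 5 = (((x 1 * y 1 - 2 * x 0 * y 2) ^ 2) • sl2 (![x 1 * y 2, x 0 * y 2 - x 1 * y 1] : Fin 2 → ℝ)) 5 := by
        simp only [brXY, Wpair, sl0, sl1, sl2, Pi.smul_apply, smul_eq_mul, cv0, cv1, cv2, cv3, cv4, cv5, cu0, cu1, Pi.zero_apply]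
        first
        | (rw [hy]; field_simp; ring)
        | ring
        | (field_simp; ring)
      exact funext fun k => match k with
      | ⟨0,_⟩ => comp0
      | ⟨1,_⟩ => comp1
      | ⟨2,_⟩ => comp2
      | ⟨3,_⟩ => comp3
      | ⟨4,_⟩ => comp4
      | ⟨5,_⟩ => comp5
    have hd12 : brXY x y (sl1 (![x 1 * y 2, x 0 * y 2 - x 1 * y 1] : Fin 2 → ℝ)) (sl2 (![x 1 * y 2, x 0 * y 2 - x 1 * y 1] : Fin 2 → ℝ))
        = ((x 1 * y 1 - 2 * x 0 * y 2) ^ 2) • sl0 (![x 1 * y 2, x 0 * y 2 - x 1 * y 1] : Fin 2 → ℝ) := by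
      have comp0 : (brXY x y (sl1 (![x 1 * y 2, x 0 * y 2 - x 1 * y 1] : Fin 2 → ℝ)) (sl2 (![x 1 * y 2, x 0 * y 2 - x 1 * y 1] : Fin 2 → ℝ))) 0 = (((x 1 * y 1 - 2 * x 0 * y 2) ^ 2) • sl0 (![x 1 * y 2, x 0 * y 2 - x 1 * y 1] : Fin 2 → ℝ)) 0 := by
        simp only [brXY, Wpair, sl0, sl1, sl2, Pi.smul_apply, smul_eq_mul, cv0, cv1, cv2, cv3, cv4, cv5, cu0, cu1, Pi.zero_apply]
        first
        | (rw [hy]; field_simp; ring)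
        | ring
        | (field_simp; ring)
      have comp1 : (brXY x y (sl1 (![x 1 * y 2, x 0 * y 2 - x 1 * y 1] : Fin 2 → ℝ)) (sl2 (![x 1 * y 2, x 0 * y 2 - x 1 * y 1] : Fin 2 → ℝ))) 1 = (((x 1 * y 1 - 2 * x 0 * y 2) ^ 2) • sl0 (![x 1 * y 2, x 0 * y 2 - x 1 * y 1] : Fin 2 → ℝ)) 1 := by
        simp only [brXY, Wpair, sl0, sl1, sl2, Pi.smul_apply, smul_eq_mul, cv0, cv1, cv2, cv3, cv4, cv5, cu0, cu1, Pi.zero_apply]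
        first
        | (rw [hy]; field_simp; ring)
        | ring
        | (field_simp; ring)
      have comp2 : (brXY x y (sl1 (![x 1 * y 2, x 0 * y 2 - x 1 * y 1] : Fin 2 → ℝ)) (sl2 (![x 1 * y 2, x 0 * y 2 - x 1 * y 1] : Fin 2 → ℝ))) 2 = (((x 1 * y 1 - 2 * x 0 * y 2) ^ 2) • sl0 (![x 1 * y 2, x 0 * y 2 - x 1 * y 1] : Fin 2 → ℝ)) 2 := by
        simp only [brXY, Wpair, sl0, sl1, sl2, Pi.smul_apply, smul_eq_mul, cv0, cv1, cv2, cv3, cv4, cv5, cu0, cu1, Pi.zero_apply]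
        first
        | (rw [hy]; field_simp; ring)
        | ring
        | (field_simp; ring)
      have comp3 : (brXY x y (sl1 (![x 1 * y 2, x 0 * y 2 - x 1 * y 1] : Fin 2 → ℝ)) (sl2 (![x 1 * y 2, x 0 * y 2 - x 1 * y 1] : Fin 2 → ℝ))) 3 = (((x 1 * y 1 - 2 * x 0 * y 2) ^ 2) • sl0 (![x 1 * y 2, x 0 * y 2 - x 1 * y 1] : Fin 2 → ℝ)) 3 := by
        simp only [brXY, Wpair, sl0, sl1, sl2, Pi.smul_apply, smul_eq_mul, cv0, cv1, cv2, cv3, cv4, cv5, cu0, cu1, Pi.zero_apply]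
        first
        | (rw [hy]; field_simp; ring)
        | ring
        | (field_simp; ring)
      have comp4 : (brXY x y (sl1 (![x 1 * y 2, x 0 * y 2 - x 1 * y 1] : Fin 2 → ℝ)) (sl2 (![x 1 * y 2, x 0 * y 2 - x 1 * y 1] : Fin 2 → ℝ))) 4 = (((x 1 * y 1 - 2 * x 0 * y 2) ^ 2) • sl0 (![x 1 * y 2, x 0 * y 2 - x 1 * y 1] : Fin 2 → ℝ)) 4 := by
        simp only [brXY, Wpair, sl0, sl1, sl2, Pi.smul_apply, smul_eq_mul, cv0, cv1, cv2, cv3, cv4, cv5, cu0, cu1, Pi.zero_apply]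
        first
        | (rw [hy]; field_simp; ring)
        | ring
        | (field_simp; ring)
      have comp5 : (brXY x y (sl1 (![x 1 * y 2, x 0 * y 2 - x 1 * y 1] : Fin 2 → ℝ)) (sl2 (![x 1 * y 2, x 0 * y 2 - x 1 * y 1] : Fin 2 → ℝ))) 5 = (((x 1 * y 1 - 2 * x 0 * y 2) ^ 2) • sl0 (![x 1 * y 2, x 0 * y 2 - x 1 * y 1] : Fin 2 → ℝ)) 5 := by
        simp only [brXY, Wpair, sl0, sl1, sl2, Pi.smul_apply, smul_eq_mul, cv0, cv1, cv2, cv3, cv4, cv5, cu0, cu1, Pi.zero_apply]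
        first
        | (rw [hy]; field_simp; ring)
        | ring
        | (field_simp; ring)
      exact funext fun k => match k with
      | ⟨0,_⟩ => comp0
      | ⟨1,_⟩ => comp1
      | ⟨2,_⟩ => comp2
      | ⟨3,_⟩ => comp3
      | ⟨4,_⟩ => comp4
      | ⟨5,_⟩ => comp5
    have hd20 : brXY x y (sl2 (![x 1 * y 2, x 0 * y 2 - x 1 * y 1] : Fin 2 → ℝ)) (sl0 (![x 1 * y 2, x 0 * y 2 - x 1 * y 1] : Fin 2 → ℝ))
        = ((x 1 * y 1 - 2 * x 0 * y 2) ^ 2) • sl1 (![x 1 * y 2, x 0 * y 2 - x 1 * y 1] : Fin 2 → ℝ) := by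
      have comp0 : (brXY x y (sl2 (![x 1 * y 2, x 0 * y 2 - x 1 * y 1] : Fin 2 → ℝ)) (sl0 (![x 1 * y 2, x 0 * y 2 - x 1 * y 1] : Fin 2 → ℝ))) 0 = (((x 1 * y 1 - 2 * x 0 * y 2) ^ 2) • sl1 (![x 1 * y 2, x 0 * y 2 - x 1 * y 1] : Fin 2 → ℝ)) 0 := by
        simp only [brXY, Wpair, sl0, sl1, sl2, Pi.smul_apply, smul_eq_mul, cv0, cv1, cv2, cv3, cv4, cv5, cu0, cu1, Pi.zero_apply]
        first
        | (rw [hy]; field_simp; ring)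
        | ring
        | (field_simp; ring)
      have comp1 : (brXY x y (sl2 (![x 1 * y 2, x 0 * y 2 - x 1 * y 1] : Fin 2 → ℝ)) (sl0 (![x 1 * y 2, x 0 * y 2 - x 1 * y 1] : Fin 2 → ℝ))) 1 = (((x 1 * y 1 - 2 * x 0 * y 2) ^ 2) • sl1 (![x 1 * y 2, x 0 * y 2 - x 1 * y 1] : Fin 2 → ℝ)) 1 := by
        simp only [brXY, Wpair, sl0, sl1, sl2, Pi.smul_apply, smul_eq_mul, cv0, cv1, cv2, cv3, cv4, cv5, cu0, cu1, Pi.zero_apply]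
        first
        | (rw [hy]; field_simp; ring)
        | ring
        | (field_simp; ring)
      have comp2 : (brXY x y (sl2 (![x 1 * y 2, x 0 * y 2 - x 1 * y 1] : Fin 2 → ℝ)) (sl0 (![x 1 * y 2, x 0 * y 2 - x 1 * y 1] : Fin 2 → ℝ))) 2 = (((x 1 * y 1 - 2 * x 0 * y 2) ^ 2) • sl1 (![x 1 * y 2, x 0 * y 2 - x 1 * y 1] : Fin 2 → ℝ)) 2 := by
        simp only [brXY, Wpair, sl0, sl1, sl2, Pi.smul_apply, smul_eq_mul, cv0, cv1, cv2, cv3, cv4, cv5, cu0, cu1, Pi.zero_apply]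
        first
        | (rw [hy]; field_simp; ring)
        | ring
        | (field_simp; ring)
      have comp3 : (brXY x y (sl2 (![x 1 * y 2, x 0 * y 2 - x 1 * y 1] : Fin 2 → ℝ)) (sl0 (![x 1 * y 2, x 0 * y 2 - x 1 * y 1] : Fin 2 → ℝ))) 3 = (((x 1 * y 1 - 2 * x 0 * y 2) ^ 2) • sl1 (![x 1 * y 2, x 0 * y 2 - x 1 * y 1] : Fin 2 → ℝ)) 3 := by
        simp only [brXY, Wpair, sl0, sl1, sl2, Pi.smul_apply, smul_eq_mul, cv0, cv1, cv2, cv3, cv4, cv5, cu0, cu1, Pi.zero_apply]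
        first
        | (rw [hy]; field_simp; ring)
        | ring
        | (field_simp; ring)
      have comp4 : (brXY x y (sl2 (![x 1 * y 2, x 0 * y 2 - x 1 * y 1] : Fin 2 → ℝ)) (sl0 (![x 1 * y 2, x 0 * y 2 - x 1 * y 1] : Fin 2 → ℝ))) 4 = (((x 1 * y 1 - 2 * x 0 * y 2) ^ 2) • sl1 (![x 1 * y 2, x 0 * y 2 - x 1 * y 1] : Fin 2 → ℝ)) 4 := by
        simp only [brXY, Wpair, sl0, sl1, sl2, Pi.smul_apply, smul_eq_mul, cv0, cv1, cv2, cv3, cv4, cv5, cu0, cu1, Pi.zero_apply]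
        first
        | (rw [hy]; field_simp; ring)
        | ring
        | (field_simp; ring)
      have comp5 : (brXY x y (sl2 (![x 1 * y 2, x 0 * y 2 - x 1 * y 1] : Fin 2 → ℝ)) (sl0 (![x 1 * y 2, x 0 * y 2 - x 1 * y 1] : Fin 2 → ℝ))) 5 = (((x 1 * y 1 - 2 * x 0 * y 2) ^ 2) • sl1 (![x 1 * y 2, x 0 * y 2 - x 1 * y 1] : Fin 2 → ℝ)) 5 := by
        simp only [brXY, Wpair, sl0, sl1, sl2, Pi.smul_apply, smul_eq_mul, cv0, cv1, cv2, cv3, cv4, cv5, cu0, cu1, Pi.zero_apply]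
        first
        | (rw [hy]; field_simp; ring)
        | ring
        | (field_simp; ring)
      exact funext fun k => match k with
      | ⟨0,_⟩ => comp0
      | ⟨1,_⟩ => comp1
      | ⟨2,_⟩ => comp2
      | ⟨3,_⟩ => comp3
      | ⟨4,_⟩ => comp4
      | ⟨5,_⟩ => comp5
    exact key x y e he (![-(x 1), x 0]) (![x 1 * y 2, x 0 * y 2 - x 1 * y 1]) ((x 1 * y 1 - 2 * x 0 * y 2) ^ 2) (pow_ne_zero 2 hq) hdet hz0 hz1 hz2 hd01 hd12 hd20
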